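/- arXiv:2202.08087 — 6 statements merged into one kernel-verified Lean document; each statement's English description precedes it below -/
import Mathlib

section
/- Let d ≥ K ≥ 2, λ_W > 0, λ̃_H > 0, and for each n ≥ 1 set λ_H := λ̃_H/n in the objective f(W,H) := (1/(2Kn))‖WH − Y_n‖_F² + (λ_W/2)‖W‖_F² + (λ_H/2)‖H‖_F², where Y_n = I_K ⊗ 1_nᵀ. Let (W*, H*) be a global minimizer of f for some n, so that H* = H̄ ⊗ 1_nᵀ for some H̄ ∈ ℝ^{d×K}. For each n, let H̃_n := H̄ ⊗ 1_nᵀ + E_n, where E_n ∈ ℝ^{d×Kn} has i.i.d. random entries with zero mean, variance σ_e², and finite fourth moment. Define Ŵ_n := argmin over W ∈ ℝ^{K×d} of (1/(2Kn))‖W·H̃_n − Y_n‖_F² + (λ_W/2)‖W‖_F². Then Ŵ_n converges almost surely, as n → ∞, to (1/(1 + σ_e²·K·√(λ̃_H/λ_W)))·W*. -/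
open Matrix Finset MeasureTheory ProbabilityTheory Filter Topology

noncomputable section

/-- Squared Frobenius norm of a real matrix. -/
def frobSq {m n : Type*} [Fintype m] [Fintype n] (A : Matrix m n ℝ) : ℝ :=
  ∑ i, ∑ j, (A i j) ^ 2


namespace NCaux

set_option maxHeartbeats 1000000

variable {ι κ ρ dι kι : Type*} [Fintype ι] [Fintype κ] [Fintype ρ] [Fintype dι] [Fintype kι]

def mip (A B : Matrix ι κ ℝ) : ℝ := ∑ i, ∑ j, A i j * B i j

lemma frobSq_nonneg (A : Matrix ι κ ℝ) : 0 ≤ frobSq A :=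
  Finset.sum_nonneg fun _ _ => Finset.sum_nonneg fun _ _ => sq_nonneg _

lemma frobSq_expand (A B : Matrix ι κ ℝ) :
    frobSq (A + B) = frobSq A + 2 * mip A B + frobSq B := by
  have h : ∀ i j, (A i j + B i j) ^ 2 = A i j ^ 2 + (2 * (A i j * B i j) + B i j ^ 2) :=
    fun i j => by ring
  simp only [frobSq, mip, Matrix.add_apply, h, Finset.sum_add_distrib, Finset.mul_sum]
  ring

lemma frobSq_smul (t : ℝ) (A : Matrix ι κ ℝ) : frobSq (t • A) = t ^ 2 * frobSq A := by
  simp [frobSq, Matrix.smul_apply, smul_eq_mul, mul_pow, Finset.mul_sum]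

lemma mip_smul (t : ℝ) (A B : Matrix ι κ ℝ) : mip A (t • B) = t * mip A B := by
  simp [mip, Matrix.smul_apply, smul_eq_mul, Finset.mul_sum]; congr 1; ext i; congr 1; ext j; ring

lemma frobSq_transpose (A : Matrix ι κ ℝ) : frobSq Aᵀ = frobSq A := by
  simp [frobSq, Matrix.transpose_apply]
  exact Finset.sum_comm

lemma lin_zero_of_quad (a b : ℝ) (hb : 0 ≤ b) (h : ∀ t : ℝ, 0 ≤ a * t + b * t ^ 2) : a = 0 := by
  have h1 := h (-a / (b + 1))
  have hb1 : (0:ℝ) < b + 1 := by linarith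
  rw [div_pow, neg_pow] at h1
  have h2 : 0 ≤ (a * (-a / (b + 1)) + b * ((-1)^2 * a ^ 2 / (b + 1) ^ 2)) * (b+1)^2 := by
    apply mul_nonneg h1 (by positivity)
  have h3 : (a * (-a / (b + 1)) + b * ((-1)^2 * a ^ 2 / (b + 1) ^ 2)) * (b+1)^2
      = -(a^2) * (b+1) + b * a^2 := by
    field_simp
  rw [h3] at h2
  nlinarith [sq_nonneg a]


lemma left_ridge_stationary [DecidableEq ι] [DecidableEq ρ]
    (r s : ℝ) (hr : 0 ≤ r) (hs : 0 ≤ s)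
    (H : Matrix ρ κ ℝ) (Y : Matrix ι κ ℝ) (W₀ : Matrix ι ρ ℝ)
    (hmin : ∀ W : Matrix ι ρ ℝ, r * frobSq (W₀ * H - Y) + s * frobSq W₀
      ≤ r * frobSq (W * H - Y) + s * frobSq W) :
    r • ((W₀ * H - Y) * Hᵀ) + s • W₀ = 0 := by
  ext p q
  set Δ : Matrix ι ρ ℝ :=
    Matrix.of (fun i m => (if i = p then (1:ℝ) else 0) * (if m = q then 1 else 0)) with hΔ
  have hΔH : ∀ i j, (Δ * H) i j = if i = p then H q j else 0 := by
    intro i j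
    simp only [Matrix.mul_apply, hΔ, Matrix.of_apply]
    have : ∀ m, (if i = p then (1:ℝ) else 0) * (if m = q then 1 else 0) * H m j
        = if m = q then (if i = p then H q j else 0) else 0 := by
      intro m; split_ifs with h1 h2 h2 <;> simp_all <;> ring
    simp [this, Finset.sum_ite_eq']
  have hmip1 : mip W₀ Δ = W₀ p q := by
    simp only [mip, hΔ, Matrix.of_apply]
    have : ∀ i m, W₀ i m * ((if i = p then (1:ℝ) else 0) * (if m = q then 1 else 0))
        = if i = p then (if m = q then W₀ i m else 0) else 0 := by
      intro i m; split_ifs <;> ring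
    simp [this, Finset.sum_ite_eq']
  have hmip2 : mip (W₀ * H - Y) (Δ * H) = ((W₀ * H - Y) * Hᵀ) p q := by
    simp only [mip]
    have : ∀ i j, (W₀ * H - Y) i j * (Δ * H) i j
        = if i = p then (W₀ * H - Y) i j * H q j else 0 := by
      intro i j; rw [hΔH]; split_ifs <;> ring
    simp only [this]
    have h2 : ∀ i : ι, (∑ j, if i = p then (W₀ * H - Y) i j * H q j else 0)
        = if i = p then ∑ j, (W₀ * H - Y) i j * H q j else 0 := by
      intro i; split_ifs <;> simp
    simp only [h2]
    rw [Finset.sum_ite_eq' Finset.univ p]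
    simp [Matrix.mul_apply, Matrix.transpose_apply]
  have key : ∀ t : ℝ, 0 ≤ (2 * r * mip (W₀ * H - Y) (Δ * H) + 2 * s * mip W₀ Δ) * t
      + (r * frobSq (Δ * H) + s * frobSq Δ) * t ^ 2 := by
    intro t
    have h1 := hmin (W₀ + t • Δ)
    have e1 : (W₀ + t • Δ) * H - Y = (W₀ * H - Y) + t • (Δ * H) := by
      rw [Matrix.add_mul, Matrix.smul_mul]; abel
    rw [e1, frobSq_expand, frobSq_expand W₀, mip_smul, mip_smul, frobSq_smul, frobSq_smul] at h1
    nlinarith [h1]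
  have hz := lin_zero_of_quad
    (2 * r * mip (W₀ * H - Y) (Δ * H) + 2 * s * mip W₀ Δ)
    (r * frobSq (Δ * H) + s * frobSq Δ)
    (add_nonneg (mul_nonneg hr (frobSq_nonneg _)) (mul_nonneg hs (frobSq_nonneg _)))
    key
  rw [hmip1, hmip2] at hz
  have heq : (r • ((W₀ * H - Y) * Hᵀ) + s • W₀) p q
      = r * ((W₀ * H - Y) * Hᵀ) p q + s * W₀ p q := by
    simp [Matrix.add_apply, Matrix.smul_apply, smul_eq_mul]
  rw [heq, Matrix.zero_apply]
  linarith [hz]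

lemma right_ridge_stationary [DecidableEq ρ] [DecidableEq κ]
    (r s : ℝ) (hr : 0 ≤ r) (hs : 0 ≤ s)
    (W : Matrix ι ρ ℝ) (Y : Matrix ι κ ℝ) (H₀ : Matrix ρ κ ℝ)
    (hmin : ∀ Hv : Matrix ρ κ ℝ, r * frobSq (W * H₀ - Y) + s * frobSq H₀
      ≤ r * frobSq (W * Hv - Y) + s * frobSq Hv) :
    r • (Wᵀ * (W * H₀ - Y)) + s • H₀ = 0 := by
  have h := left_ridge_stationary r s hr hs Wᵀ Yᵀ H₀ᵀ ?_
  · have h2 := congrArg Matrix.transpose h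
    simpa [Matrix.transpose_add, Matrix.transpose_smul, Matrix.transpose_mul,
      Matrix.transpose_sub, Matrix.transpose_transpose] using h2
  · intro W'
    have h3 := hmin W'ᵀ
    have e1 : ∀ (Hv : Matrix ρ κ ℝ), Hvᵀ * Wᵀ - Yᵀ = (W * Hv - Y)ᵀ := by
      intro Hv; rw [Matrix.transpose_sub, Matrix.transpose_mul]
    calc r * frobSq (H₀ᵀ * Wᵀ - Yᵀ) + s * frobSq H₀ᵀ
        = r * frobSq (W * H₀ - Y) + s * frobSq H₀ := by
          rw [e1, frobSq_transpose, frobSq_transpose]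
      _ ≤ r * frobSq (W * W'ᵀ - Y) + s * frobSq W'ᵀ := hmin W'ᵀ
      _ = r * frobSq (W' * Wᵀ - Yᵀ) + s * frobSq W' := by
          rw [frobSq_transpose W',
            show (W' * Wᵀ - Yᵀ) = (W * W'ᵀ - Y)ᵀ by
              rw [Matrix.transpose_sub, Matrix.transpose_mul, Matrix.transpose_transpose],
            frobSq_transpose]


lemma det_psd_add_smul_one_ne_zero [DecidableEq ρ] (H : Matrix ρ κ ℝ) (c t : ℝ)
    (hc : 0 ≤ c) (ht : 0 < t) :
    (c • (H * Hᵀ) + t • (1 : Matrix ρ ρ ℝ)).det ≠ 0 := by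
  intro hdet
  obtain ⟨v, hv, hv0⟩ := Matrix.exists_mulVec_eq_zero_iff.mpr hdet
  have h1 : v ⬝ᵥ ((c • (H * Hᵀ) + t • (1 : Matrix ρ ρ ℝ)) *ᵥ v) = 0 := by
    rw [hv0, dotProduct_zero]
  rw [Matrix.add_mulVec, Matrix.smul_mulVec, Matrix.smul_mulVec,
    Matrix.one_mulVec, dotProduct_add, dotProduct_smul,
    dotProduct_smul, ← Matrix.mulVec_mulVec, smul_eq_mul, smul_eq_mul] at h1
  have h2 : v ⬝ᵥ (H *ᵥ (Hᵀ *ᵥ v)) = (Hᵀ *ᵥ v) ⬝ᵥ (Hᵀ *ᵥ v) := by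
    rw [Matrix.dotProduct_mulVec, ← Matrix.mulVec_transpose]
  rw [h2] at h1
  have h3 : 0 ≤ (Hᵀ *ᵥ v) ⬝ᵥ (Hᵀ *ᵥ v) := Finset.sum_nonneg fun i _ => mul_self_nonneg _
  have h4 : 0 < v ⬝ᵥ v := by
    rcases lt_or_eq_of_le (Finset.sum_nonneg fun i (_ : i ∈ Finset.univ) =>
      mul_self_nonneg (v i)) with h | h
    · exact h
    · exact absurd (dotProduct_self_eq_zero.mp h.symm) hv
  nlinarith [mul_nonneg hc h3, mul_pos ht h4]

lemma weight_structure [DecidableEq dι] [DecidableEq kι]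
    (lW ltH Kc : ℝ) (hlW : 0 < lW) (hltH : 0 < ltH) (hKc : 0 < Kc)
    (Ws : Matrix kι dι ℝ) (Hb : Matrix dι kι ℝ)
    (eq1 : Ws * (Hb * Hbᵀ) + (Kc * lW) • Ws = Hbᵀ)
    (eq2 : Wsᵀ * (Ws * Hb) - Wsᵀ + (Kc * ltH) • Hb = 0) :
    Ws = Real.sqrt (ltH / lW) • Hbᵀ := by
  set a : ℝ := Real.sqrt (ltH / lW) with ha_def
  have ha2 : a ^ 2 = ltH / lW := Real.sq_sqrt (by positivity)
  have ha : 0 < a := Real.sqrt_pos.mpr (by positivity)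
  have ha2' : a ^ 2 * lW = ltH := by rw [ha2]; field_simp
  clear_value a
  set G : Matrix dι dι ℝ := Hb * Hbᵀ + (Kc * lW) • 1 with hG_def
  have hdetG : G.det ≠ 0 := by
    have := det_psd_add_smul_one_ne_zero Hb 1 (Kc * lW) zero_le_one (by positivity)
    rwa [one_smul] at this
  have hu : IsUnit G.det := isUnit_iff_ne_zero.mpr hdetG
  have hWsG : Ws * G = Hbᵀ := by
    rw [hG_def, Matrix.mul_add, Matrix.mul_smul, Matrix.mul_one]; exact eq1
  have hWs : Ws = Hbᵀ * G⁻¹ := by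
    conv_lhs => rw [← Matrix.mul_nonsing_inv_cancel_right G Ws hu]
    rw [hWsG]
  have hGT : Gᵀ = G := by
    rw [hG_def, Matrix.transpose_add, Matrix.transpose_mul, Matrix.transpose_transpose,
      Matrix.transpose_smul, Matrix.transpose_one]
  set M : Matrix kι kι ℝ := Ws * Hb with hM_def
  clear_value M
  have hMT : Mᵀ = M := by
    rw [hM_def, hWs, Matrix.transpose_mul, Matrix.transpose_mul, Matrix.transpose_transpose,
      Matrix.transpose_nonsing_inv, hGT, Matrix.mul_assoc]
  have h1 : M * Hbᵀ = Hbᵀ - (Kc * lW) • Ws := by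
    rw [hM_def, Matrix.mul_assoc, eq_sub_iff_add_eq]; exact eq1
  have h2 : M * Ws = Ws - (Kc * ltH) • Hbᵀ := by
    have h' := congrArg Matrix.transpose eq2
    simp only [Matrix.transpose_sub, Matrix.transpose_add, Matrix.transpose_mul,
      Matrix.transpose_transpose, Matrix.transpose_smul, Matrix.transpose_zero] at h'
    rw [hMT] at h'
    calc M * Ws = (M * Ws - Ws + (Kc * ltH) • Hbᵀ) + Ws - (Kc * ltH) • Hbᵀ := by abel
      _ = Ws - (Kc * ltH) • Hbᵀ := by rw [h']; abel
  set D : Matrix kι dι ℝ := Ws - a • Hbᵀ with hD_def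
  have hD_def' : D = Ws - a • Hbᵀ := hD_def
  clear_value D
  have key : Kc * ltH + a = (1 + a * Kc * lW) * a := by
    have : (1 + a * Kc * lW) * a = a + a ^ 2 * lW * Kc := by ring
    rw [this, ha2']; ring
  have hMD : M * D = (1 + a * Kc * lW) • D := by
    rw [hD_def', Matrix.mul_sub, Matrix.mul_smul, h1, h2]
    ext i j
    simp only [Matrix.sub_apply, Matrix.smul_apply, Matrix.transpose_apply, smul_eq_mul]
    linear_combination (-(Hb j i)) * key
  -- columns of D vanish
  have hDzero : D = 0 := by
    ext k jd
    show D k jd = 0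
    have hMv : M *ᵥ (fun k' => D k' jd) = (1 + a * Kc * lW) • (fun k' => D k' jd) := by
      ext k'
      have := congrFun (congrFun hMD k') jd
      simpa [Matrix.mul_apply, Matrix.mulVec, dotProduct, Matrix.smul_apply,
        Pi.smul_apply, smul_eq_mul] using this
    set v : kι → ℝ := fun k' => D k' jd with hv_def
    obtain ⟨z, hz_def⟩ : ∃ z : dι → ℝ, z = Hb *ᵥ v := ⟨_, rfl⟩
    obtain ⟨w, hw_def⟩ : ∃ w : dι → ℝ, w = G⁻¹ *ᵥ z := ⟨_, rfl⟩
    obtain ⟨u, hu_def⟩ : ∃ u : kι → ℝ, u = Hbᵀ *ᵥ w := ⟨_, rfl⟩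
    have hGw : G *ᵥ w = z := by
      rw [hw_def, Matrix.mulVec_mulVec, Matrix.mul_nonsing_inv _ hu, Matrix.one_mulVec]
    have hMvu : M *ᵥ v = u := by
      rw [hu_def, hw_def, hz_def, Matrix.mulVec_mulVec, Matrix.mulVec_mulVec,
        ← hWs, ← hM_def]
    have hq1 : v ⬝ᵥ u = z ⬝ᵥ w := by
      rw [hu_def, Matrix.dotProduct_mulVec, Matrix.vecMul_transpose, ← hz_def]
    have hq2 : z ⬝ᵥ w = u ⬝ᵥ u + (Kc * lW) * (w ⬝ᵥ w) := by
      conv_lhs => rw [← hGw]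
      rw [hG_def, Matrix.add_mulVec, Matrix.smul_mulVec, Matrix.one_mulVec,
        add_dotProduct, smul_dotProduct, smul_eq_mul]
      congr 1
      rw [← Matrix.mulVec_mulVec, dotProduct_comm, Matrix.dotProduct_mulVec,
        ← Matrix.mulVec_transpose, ← hu_def, hu_def]
    have hCS : (v ⬝ᵥ u) ^ 2 ≤ (v ⬝ᵥ v) * (u ⬝ᵥ u) := by
      have := Finset.sum_mul_sq_le_sq_mul_sq Finset.univ v u
      simpa [dotProduct, sq] using this
    have hww : 0 ≤ w ⬝ᵥ w := Finset.sum_nonneg fun i _ => mul_self_nonneg _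
    have huu : 0 ≤ u ⬝ᵥ u := Finset.sum_nonneg fun i _ => mul_self_nonneg _
    have hvv : 0 ≤ v ⬝ᵥ v := Finset.sum_nonneg fun i _ => mul_self_nonneg _
    have hqB : v ⬝ᵥ u = (1 + a * Kc * lW) * (v ⬝ᵥ v) := by
      rw [← hMvu, hMv, dotProduct_smul, smul_eq_mul]
    have hqA : v ⬝ᵥ u = u ⬝ᵥ u + (Kc * lW) * (w ⬝ᵥ w) := by rw [hq1, hq2]
    have hs0 : 0 < a * Kc * lW := by positivity
    have hq0 : 0 ≤ v ⬝ᵥ u := by rw [hqA]; positivity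
    have huuq : u ⬝ᵥ u ≤ v ⬝ᵥ u := by nlinarith
    have h4 : (v ⬝ᵥ u) ^ 2 ≤ (v ⬝ᵥ v) * (v ⬝ᵥ u) :=
      le_trans hCS (mul_le_mul_of_nonneg_left huuq hvv)
    have h4' := h4
    rw [hqB] at h4'
    have hfac : ((a * Kc * lW) + (a * Kc * lW) ^ 2) * (v ⬝ᵥ v) ^ 2 ≤ 0 := by
      have hring : ((1 + a * Kc * lW) * (v ⬝ᵥ v)) ^ 2
          - (v ⬝ᵥ v) * ((1 + a * Kc * lW) * (v ⬝ᵥ v))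
          = ((a * Kc * lW) + (a * Kc * lW) ^ 2) * (v ⬝ᵥ v) ^ 2 := by ring
      linarith [h4', hring]
    have hpos : (0:ℝ) < (a * Kc * lW) + (a * Kc * lW) ^ 2 := by positivity
    have hVsq : (v ⬝ᵥ v) ^ 2 ≤ 0 := by
      by_contra hcon
      push_neg at hcon
      nlinarith [mul_pos hpos hcon]
    have hV2 : (v ⬝ᵥ v) ^ 2 = 0 := le_antisymm hVsq (sq_nonneg _)
    have hvv2 : (v ⬝ᵥ v) = 0 := by
      exact (pow_eq_zero_iff (two_ne_zero)).mp hV2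
    have := dotProduct_self_eq_zero.mp hvv2
    have hk := congrFun this k
    simpa [hv_def] using hk
  rw [hD_def'] at hDzero
  rw [← sub_eq_zero]
  exact hDzero


lemma abs_le_one_add_pow4 (x : ℝ) : |x| ≤ 1 + x ^ 4 := by
  rcases le_total (|x|) 1 with h | h
  · have : (0:ℝ) ≤ x ^ 4 := by positivity
    linarith
  · have h1 : |x| ≤ |x| ^ 4 := le_self_pow₀ h (by norm_num)
    have h2 : |x| ^ 4 = x ^ 4 := by
      rw [← abs_pow]; exact abs_of_nonneg (by positivity)
    linarith

lemma sq_le_one_add_pow4 (x : ℝ) : x ^ 2 ≤ 1 + x ^ 4 := by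
  nlinarith [sq_nonneg (x ^ 2 - 1), sq_nonneg x, sq_nonneg (x ^ 2)]

lemma abs_mul_le_one_add_pow4 (x y : ℝ) : |x * y| ≤ 1 + (x ^ 4 + y ^ 4) := by
  rw [abs_le]
  constructor <;> nlinarith [sq_nonneg (x*y - 1), sq_nonneg (x*y + 1), sq_nonneg (x^2 - y^2),
    sq_nonneg (x^2 + y^2), sq_nonneg (x*y)]


variable {Ω : Type*} [MeasurableSpace Ω] {μ : Measure Ω} [IsProbabilityMeasure μ]
variable {d K : ℕ}

lemma slln_combined (σe : ℝ) (e : Fin d × Fin K × ℕ → Ω → ℝ)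
    (hmeas : ∀ p, Measurable (e p))
    (hindep : iIndepFun e μ)
    (hident : ∀ p q, IdentDistrib (e p) (e q) μ μ)
    (hmean : ∀ p, ∫ ω, e p ω ∂μ = 0)
    (hvar : ∀ p, ∫ ω, (e p ω) ^ 2 ∂μ = σe ^ 2)
    (hmom4 : ∀ p, Integrable (fun ω => (e p ω) ^ 4) μ) :
    ∀ᵐ ω ∂μ,
      (∀ (j : Fin d) (k : Fin K),
        Tendsto (fun n : ℕ => (∑ i ∈ Finset.range n, e (j, k, i) ω) / n) atTop (𝓝 0)) ∧
      (∀ (j j' : Fin d) (k : Fin K),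
        Tendsto (fun n : ℕ => (∑ i ∈ Finset.range n, e (j, k, i) ω * e (j', k, i) ω) / n)
          atTop (𝓝 (if j = j' then σe ^ 2 else 0))) := by
  have hint1 : ∀ p, Integrable (e p) μ := by
    intro p
    refine Integrable.mono' ((integrable_const (1:ℝ)).add (hmom4 p))
      (hmeas p).aestronglyMeasurable (Filter.Eventually.of_forall fun ω => ?_)
    have hb := abs_le_one_add_pow4 (e p ω)
    rw [Real.norm_eq_abs]
    exact hb
  have hint2 : ∀ p q, Integrable (fun ω => e p ω * e q ω) μ := by
    intro p q
    refine Integrable.mono' ((integrable_const (1:ℝ)).add ((hmom4 p).add (hmom4 q)))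
      ((hmeas p).mul (hmeas q)).aestronglyMeasurable (Filter.Eventually.of_forall fun ω => ?_)
    have hb := abs_mul_le_one_add_pow4 (e p ω) (e q ω)
    rw [Real.norm_eq_abs]
    exact hb
  -- part 1
  have part1 : ∀ᵐ ω ∂μ, ∀ (j : Fin d) (k : Fin K),
      Tendsto (fun n : ℕ => (∑ i ∈ Finset.range n, e (j, k, i) ω) / n) atTop (𝓝 0) := by
    rw [ae_all_iff]
    intro j
    rw [ae_all_iff]
    intro k
    have h := strong_law_ae_real (fun i ω => e (j, k, i) ω) (hint1 (j, k, 0))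
      (fun i i' hne => hindep.indepFun (by simp [Prod.ext_iff, hne]))
      (fun i => hident (j, k, i) (j, k, 0))
    have h0 : (∫ x, (fun (i : ℕ) (ω : Ω) => e (j, k, i) ω) 0 x ∂μ) = 0 := hmean (j, k, 0)
    rw [h0] at h
    exact h
  -- part 2
  have part2 : ∀ᵐ ω ∂μ, ∀ (j j' : Fin d) (k : Fin K),
      Tendsto (fun n : ℕ => (∑ i ∈ Finset.range n, e (j, k, i) ω * e (j', k, i) ω) / n)
        atTop (𝓝 (if j = j' then σe ^ 2 else 0)) := by
    rw [ae_all_iff]; intro j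
    rw [ae_all_iff]; intro j'
    rw [ae_all_iff]; intro k
    have hprodident : ∀ i : ℕ,
        IdentDistrib (fun ω => e (j, k, i) ω * e (j', k, i) ω)
          (fun ω => e (j, k, 0) ω * e (j', k, 0) ω) μ μ := by
      intro i
      by_cases hjj : j = j'
      · subst hjj
        exact (hident (j, k, i) (j, k, 0)).comp (measurable_id.mul measurable_id)
      · have hne1 : (j, k, (i:ℕ)) ≠ (j', k, (i:ℕ)) := by simp [Prod.ext_iff, hjj]
        have hne0 : (j, k, (0:ℕ)) ≠ (j', k, (0:ℕ)) := by simp [Prod.ext_iff, hjj]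
        have h1 := hindep.indepFun hne1
        have h0 := hindep.indepFun hne0
        have m1 := (indepFun_iff_map_prod_eq_prod_map_map
          (hmeas (j, k, i)).aemeasurable (hmeas (j', k, i)).aemeasurable).mp h1
        have m0 := (indepFun_iff_map_prod_eq_prod_map_map
          (hmeas (j, k, 0)).aemeasurable (hmeas (j', k, 0)).aemeasurable).mp h0
        have hpair : IdentDistrib (fun ω => (e (j, k, i) ω, e (j', k, i) ω))
            (fun ω => (e (j, k, 0) ω, e (j', k, 0) ω)) μ μ := by
          refine ⟨((hmeas (j, k, i)).prodMk (hmeas (j', k, i))).aemeasurable,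
            ((hmeas (j, k, 0)).prodMk (hmeas (j', k, 0))).aemeasurable, ?_⟩
          rw [m1, m0, (hident (j, k, i) (j, k, 0)).map_eq, (hident (j', k, i) (j', k, 0)).map_eq]
        exact hpair.comp (measurable_fst.mul measurable_snd)
    have hprodindep : Pairwise (Function.onFun (IndepFun · · μ)
        (fun i : ℕ => fun ω => e (j, k, i) ω * e (j', k, i) ω)) := by
      intro i i' hne
      have := hindep.indepFun_mul_mul hmeas (j, k, i) (j', k, i) (j, k, i') (j', k, i')
        (by simp [Prod.ext_iff, hne]) (by simp [Prod.ext_iff, hne])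
        (by simp [Prod.ext_iff, hne]) (by simp [Prod.ext_iff, hne])
      exact this
    have h := strong_law_ae_real (fun i ω => e (j, k, i) ω * e (j', k, i) ω)
      (hint2 (j, k, 0) (j', k, 0)) hprodindep hprodident
    have hmean2 : (∫ x, (fun (i : ℕ) (ω : Ω) => e (j, k, i) ω * e (j', k, i) ω) 0 x ∂μ)
        = if j = j' then σe ^ 2 else 0 := by
      show (∫ x, e (j, k, 0) x * e (j', k, 0) x ∂μ) = _
      by_cases hjj : j = j'
      · subst hjj
        simp only [if_pos rfl]
        rw [show (fun ω => e (j, k, 0) ω * e (j, k, 0) ω) = fun ω => (e (j, k, 0) ω) ^ 2 by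
          funext ω; ring]
        exact hvar (j, k, 0)
      · simp only [if_neg hjj]
        have hne0 : (j, k, (0:ℕ)) ≠ (j', k, (0:ℕ)) := by simp [Prod.ext_iff, hjj]
        have h0 := hindep.indepFun hne0
        have := h0.integral_mul_eq_mul_integral (hmeas (j, k, 0)).aestronglyMeasurable
          (hmeas (j', k, 0)).aestronglyMeasurable
        rw [show (fun ω => e (j, k, 0) ω * e (j', k, 0) ω) = e (j, k, 0) * e (j', k, 0) from rfl]
        rw [this, hmean (j, k, 0), zero_mul]
    rw [hmean2] at h
    exact h
  filter_upwards [part1, part2] with ω h1 h2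
  exact ⟨h1, h2⟩


end NCaux

open NCaux

set_option maxHeartbeats 1600000

/-- **Theorem 5** (asymptotics of ridge weights for fixed perturbed collapsed features).
With `λ_H = λ̃_H/n`, let `(W*, H*)` be a global minimizer of the bias-free regularized-MSE
UFM objective for some `n₀`, so `H* = H̄ ⊗ 1_{n₀}ᵀ`.  For each `n`, let
`H̃_n = H̄ ⊗ 1_nᵀ + E_n` with i.i.d. zero-mean, variance-`σ_e²`, finite-fourth-moment
entries, and let `Ŵ_n` be the minimizer of
`W ↦ (1/(2Kn))‖WH̃_n − Y_n‖_F² + (λ_W/2)‖W‖_F²`.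
Then almost surely `Ŵ_n → (1/(1 + σ_e²K√(λ̃_H/λ_W)))·W*` as `n → ∞`. -/
theorem ridge_weights_converge_to_scaled_optimal
    (K d : ℕ) (hK : 2 ≤ K) (hd : K ≤ d)
    (lW ltH : ℝ) (hlW : 0 < lW) (hltH : 0 < ltH)
    (σe : ℝ)
    (Ω : Type*) [MeasurableSpace Ω] (μ : Measure Ω) [IsProbabilityMeasure μ]
    -- the infinite array of i.i.d. noise entries
    (e : Fin d × Fin K × ℕ → Ω → ℝ)
    (hmeas : ∀ p, Measurable (e p))
    (hindep : iIndepFun e μ)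
    (hident : ∀ p q, IdentDistrib (e p) (e q) μ μ)
    (hmean : ∀ p, ∫ ω, e p ω ∂μ = 0)
    (hvar : ∀ p, ∫ ω, (e p ω) ^ 2 ∂μ = σe ^ 2)
    (hmom4 : ∀ p, Integrable (fun ω => (e p ω) ^ 4) μ)
    -- a global minimizer of the UFM objective for some n₀ (with λ_H = λ̃_H/n₀)
    (n₀ : ℕ) (hn₀ : 1 ≤ n₀)
    (f : Matrix (Fin K) (Fin d) ℝ → Matrix (Fin d) (Fin K × Fin n₀) ℝ → ℝ)
    (hf : ∀ W H, f W H =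
      1 / (2 * (K : ℝ) * (n₀ : ℝ)) *
          frobSq (W * H - Matrix.of (fun k (p : Fin K × Fin n₀) =>
            if p.1 = k then (1 : ℝ) else 0))
        + lW / 2 * frobSq W + (ltH / (n₀ : ℝ)) / 2 * frobSq H)
    (Ws : Matrix (Fin K) (Fin d) ℝ) (Hs : Matrix (Fin d) (Fin K × Fin n₀) ℝ)
    (hmin : ∀ W H, f Ws Hs ≤ f W H)
    (Hbar : Matrix (Fin d) (Fin K) ℝ)
    (hHs : ∀ (j : Fin d) (k : Fin K) (i : Fin n₀), Hs j (k, i) = Hbar j k)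
    -- the perturbed features H̃_n = H̄ ⊗ 1_nᵀ + E_n for every n
    (Htil : (n : ℕ) → Ω → Matrix (Fin d) (Fin K × Fin n) ℝ)
    (hHtil : ∀ n ω (j : Fin d) (k : Fin K) (i : Fin n),
      Htil n ω j (k, i) = Hbar j k + e (j, k, (i : ℕ)) ω)
    -- the ridge objective and its minimizer Ŵ_n for every n
    (φ : (n : ℕ) → Ω → Matrix (Fin K) (Fin d) ℝ → ℝ)
    (hφ : ∀ n ω W, φ n ω W =
      1 / (2 * (K : ℝ) * (n : ℝ)) *
          frobSq (W * Htil n ω - Matrix.of (fun k (p : Fin K × Fin n) =>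
            if p.1 = k then (1 : ℝ) else 0))
        + lW / 2 * frobSq W)
    (What : (n : ℕ) → Ω → Matrix (Fin K) (Fin d) ℝ)
    (hWhat : ∀ n ω W, φ n ω (What n ω) ≤ φ n ω W) :
    ∀ᵐ ω ∂μ, Tendsto (fun n => What n ω) atTop
      (nhds ((1 / (1 + σe ^ 2 * (K : ℝ) * Real.sqrt (ltH / lW))) • Ws)) := by
  classical
  set Kr : ℝ := (K : ℝ) with hKr_def
  have hKr : (0:ℝ) < Kr := by
    have h0 : 0 < K := by omega
    rw [hKr_def]
    exact_mod_cast h0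
  set a : ℝ := Real.sqrt (ltH / lW) with ha_def
  have ha : 0 < a := Real.sqrt_pos.mpr (by positivity)
  set c : ℝ := 1 / (1 + σe ^ 2 * Kr * a) with hc_def
  have hn₀R : (0:ℝ) < (n₀ : ℝ) := by exact_mod_cast hn₀
  -- Step A: first-order conditions of the UFM minimizer, collapsed
  have hKrne : Kr ≠ 0 := ne_of_gt hKr
  have hn₀ne : ((n₀:ℝ)) ≠ 0 := ne_of_gt hn₀R
  have heq1 : Ws * (Hbar * Hbarᵀ) + (Kr * lW) • Ws = Hbarᵀ := by
    have hst := left_ridge_stationary (1/(2*Kr*(n₀:ℝ))) (lW/2)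
      (one_div_nonneg.mpr (by positivity)) (by positivity)
      Hs (Matrix.of fun k (p : Fin K × Fin n₀) => if p.1 = k then (1:ℝ) else 0) Ws
      (fun W => by have h := hmin W Hs; rw [hf, hf] at h; linarith)
    have hcol : (Ws * Hs - Matrix.of (fun k (p : Fin K × Fin n₀) =>
        if p.1 = k then (1:ℝ) else 0)) * Hsᵀ
        = (n₀:ℝ) • ((Ws * Hbar - 1) * Hbarᵀ) := by
      ext i jd
      simp only [Matrix.mul_apply, Matrix.sub_apply, Matrix.smul_apply, smul_eq_mul,
        Matrix.transpose_apply, Matrix.one_apply, Matrix.of_apply]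
      rw [Fintype.sum_prod_type]
      have hterm : ∀ (k : Fin K) (l : Fin n₀),
          ((∑ m, Ws i m * Hs m (k, l)) - if k = i then (1:ℝ) else 0) * Hs jd (k, l)
            = ((∑ m, Ws i m * Hbar m k) - if i = k then (1:ℝ) else 0) * Hbar jd k := by
        intro k l
        by_cases hik : i = k
        · subst hik; simp [hHs]
        · simp [hHs, hik, Ne.symm hik]
      calc (∑ k, ∑ l, ((∑ m, Ws i m * Hs m (k, l)) - if k = i then (1:ℝ) else 0) * Hs jd (k, l))
          = ∑ k, ∑ _l : Fin n₀, ((∑ m, Ws i m * Hbar m k)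
              - if i = k then (1:ℝ) else 0) * Hbar jd k := by
            exact Finset.sum_congr rfl fun k _ => Finset.sum_congr rfl fun l _ => hterm k l
        _ = (n₀:ℝ) * ∑ k, ((∑ m, Ws i m * Hbar m k) - if i = k then (1:ℝ) else 0) * Hbar jd k := by
            simp [Finset.sum_const, Finset.card_univ, nsmul_eq_mul, Finset.mul_sum]
    rw [hcol, smul_smul] at hst
    rw [show (1/(2*Kr*(n₀:ℝ))) * (n₀:ℝ) = 1/(2*Kr) by field_simp] at hst
    have h2 := congrArg (fun M : Matrix (Fin K) (Fin d) ℝ => (2*Kr) • M) hst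
    simp only [smul_add, smul_smul, smul_zero] at h2
    rw [show (2*Kr)*(1/(2*Kr)) = 1 by field_simp,
      show (2*Kr)*(lW/2) = Kr*lW by ring, one_smul] at h2
    rw [Matrix.sub_mul, Matrix.one_mul] at h2
    rw [← sub_eq_zero]
    calc Ws * (Hbar * Hbarᵀ) + (Kr * lW) • Ws - Hbarᵀ
        = (Ws * Hbar * Hbarᵀ - Hbarᵀ) + (Kr*lW) • Ws := by rw [← Matrix.mul_assoc]; abel
      _ = 0 := h2
  have heq2 : Wsᵀ * (Ws * Hbar) - Wsᵀ + (Kr * ltH) • Hbar = 0 := by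
    have hst := right_ridge_stationary (1/(2*Kr*(n₀:ℝ))) ((ltH/(n₀:ℝ))/2)
      (one_div_nonneg.mpr (by positivity)) (by positivity)
      Ws (Matrix.of fun k (p : Fin K × Fin n₀) => if p.1 = k then (1:ℝ) else 0) Hs
      (fun Hv => by have h := hmin Ws Hv; rw [hf, hf] at h; linarith)
    ext jd k
    have h := congrFun (congrFun hst jd) (k, (⟨0, hn₀⟩ : Fin n₀))
    simp only [Matrix.add_apply, Matrix.smul_apply, Matrix.mul_apply, Matrix.sub_apply,
      Matrix.transpose_apply, Matrix.of_apply, Matrix.zero_apply, smul_eq_mul, hHs] at h ⊢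
    have hsum : (∑ i, Ws i jd * ((∑ m, Ws i m * Hbar m k) - if k = i then (1:ℝ) else 0))
        = (∑ i, Ws i jd * (∑ m, Ws i m * Hbar m k)) - Ws k jd := by
      simp only [mul_sub, mul_ite, mul_one, mul_zero]
      rw [Finset.sum_sub_distrib, Finset.sum_ite_eq Finset.univ k (fun i => Ws i jd)]
      simp
    rw [hsum] at h
    field_simp at h
    have hgoal2 : ((∑ x : Fin K, Ws x jd * ∑ j : Fin d, Ws x j * Hbar j k) - Ws k jd
        + Kr * ltH * Hbar jd k) * (2*(n₀:ℝ)) = 0 := by linear_combination (2*(n₀:ℝ)) * h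
    have h2n : (2*(n₀:ℝ)) ≠ 0 := by positivity
    have hres := (mul_eq_zero.mp hgoal2).resolve_right h2n
    linarith [hres]
  have hWsa : Ws = a • Hbarᵀ := by
    rw [ha_def]
    exact weight_structure lW ltH Kr hlW hltH hKr Ws Hbar heq1 heq2
  -- Step B: ridge normal equations for every n, ω
  set An : (n : ℕ) → Ω → Matrix (Fin d) (Fin d) ℝ :=
    fun n ω => (1/(Kr*(n:ℝ))) • (Htil n ω * (Htil n ω)ᵀ) + lW • 1 with hAn_def
  set Bn : (n : ℕ) → Ω → Matrix (Fin K) (Fin d) ℝ :=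
    fun n ω => (1/(Kr*(n:ℝ))) • ((Matrix.of fun k (p : Fin K × Fin n) =>
      if p.1 = k then (1:ℝ) else 0) * (Htil n ω)ᵀ) with hBn_def
  have hdetAn : ∀ n ω', ((An n ω').det) ≠ 0 := by
    intro n ω'
    exact det_psd_add_smul_one_ne_zero _ _ _
      (one_div_nonneg.mpr (by positivity)) hlW
  have hWeq : ∀ n ω', What n ω' = Bn n ω' * (An n ω')⁻¹ := by
    intro n ω'
    have hst := left_ridge_stationary (1/(2*Kr*(n:ℝ))) (lW/2)
      (one_div_nonneg.mpr (by positivity)) (by positivity)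
      (Htil n ω')
      (Matrix.of fun k (p : Fin K × Fin n) => if p.1 = k then (1:ℝ) else 0)
      (What n ω')
      (fun W => by
        have h := hWhat n ω' W
        rw [hφ, hφ] at h
        linarith)
    have h2 := congrArg (fun M : Matrix (Fin K) (Fin d) ℝ => (2:ℝ) • M) hst
    simp only [smul_add, smul_smul, smul_zero] at h2
    rw [show (2:ℝ)*(1/(2*Kr*(n:ℝ))) = 1/(Kr*(n:ℝ)) by
        rw [one_div, one_div, mul_assoc, mul_inv]
        rw [← mul_assoc, mul_inv_cancel₀ (two_ne_zero), one_mul],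
      show (2:ℝ)*(lW/2) = lW by ring] at h2
    rw [Matrix.sub_mul, Matrix.mul_assoc, smul_sub] at h2
    have key : (1/(Kr*(n:ℝ))) • (What n ω' * (Htil n ω' * (Htil n ω')ᵀ)) + lW • What n ω'
        = (1/(Kr*(n:ℝ))) • ((Matrix.of fun k (p : Fin K × Fin n) =>
            if p.1 = k then (1:ℝ) else 0) * (Htil n ω')ᵀ) := by
      rw [← sub_eq_zero]
      calc (1/(Kr*(n:ℝ))) • (What n ω' * (Htil n ω' * (Htil n ω')ᵀ)) + lW • What n ω'
            - (1/(Kr*(n:ℝ))) • ((Matrix.of fun k (p : Fin K × Fin n) =>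
                if p.1 = k then (1:ℝ) else 0) * (Htil n ω')ᵀ)
          = ((1/(Kr*(n:ℝ))) • (What n ω' * (Htil n ω' * (Htil n ω')ᵀ))
              - (1/(Kr*(n:ℝ))) • ((Matrix.of fun k (p : Fin K × Fin n) =>
                if p.1 = k then (1:ℝ) else 0) * (Htil n ω')ᵀ)) + lW • What n ω' := by abel
        _ = 0 := h2
    have hnormal : What n ω' * An n ω' = Bn n ω' := by
      simp only [hAn_def, hBn_def]
      rw [Matrix.mul_add, Matrix.mul_smul, Matrix.mul_smul, Matrix.mul_one]
      exact key
    have hcan := Matrix.mul_nonsing_inv_cancel_right (An n ω') (What n ω')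
      (isUnit_iff_ne_zero.mpr (hdetAn n ω'))
    rw [hnormal] at hcan
    exact hcan.symm
  -- Step C: the limit matrices
  set Ainf : Matrix (Fin d) (Fin d) ℝ :=
    (1/Kr) • (Hbar * Hbarᵀ) + (σe^2 + lW) • 1 with hAinf_def
  set Binf : Matrix (Fin K) (Fin d) ℝ := (1/Kr) • Hbarᵀ with hBinf_def
  have hdetAinf : Ainf.det ≠ 0 :=
    det_psd_add_smul_one_ne_zero _ _ _ (by positivity) (by positivity)
  have hfin : (c • Ws) * Ainf = Binf := by
    have hsub : Ws * (Hbar * Hbarᵀ) = Hbarᵀ - (Kr * lW) • Ws := by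
      rw [eq_sub_iff_add_eq]; exact heq1
    have hKrne : Kr ≠ 0 := ne_of_gt hKr
    have hdenne : 1 + σe ^ 2 * Kr * a ≠ 0 := by positivity
    calc (c • Ws) * Ainf = c • (Ws * Ainf) := Matrix.smul_mul c Ws Ainf
      _ = c • ((1/Kr) • (Ws * (Hbar * Hbarᵀ)) + (σe^2 + lW) • Ws) := by
          rw [hAinf_def, Matrix.mul_add, Matrix.mul_smul, Matrix.mul_smul, Matrix.mul_one]
      _ = c • ((1/Kr) • Hbarᵀ - lW • Ws + (σe^2 + lW) • Ws) := by
          rw [hsub, smul_sub, smul_smul,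
            show (1/Kr) * (Kr * lW) = lW by field_simp]
      _ = c • ((1/Kr) • Hbarᵀ + σe^2 • Ws) := by
          congr 1
          rw [add_smul]
          abel
      _ = (c * (1/Kr)) • Hbarᵀ + (c * (σe^2 * a)) • Hbarᵀ := by
          rw [hWsa, smul_smul, smul_add, smul_smul, smul_smul]
      _ = ((c * (1/Kr)) + c * (σe^2 * a)) • Hbarᵀ := (add_smul _ _ _).symm
      _ = (1/Kr) • Hbarᵀ := by
          rw [show c * (1/Kr) + c * (σe^2 * a) = 1/Kr from by
            rw [hc_def]; field_simp]
      _ = Binf := hBinf_def.symm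
  have hlimval : Binf * Ainf⁻¹ = c • Ws := by
    have h := Matrix.mul_nonsing_inv_cancel_right Ainf (c • Ws)
      (isUnit_iff_ne_zero.mpr hdetAinf)
    rw [hfin] at h
    exact h
  -- Step D: almost-sure convergence
  have hae := slln_combined σe e hmeas hindep hident hmean hvar hmom4
  filter_upwards [hae] with ω hω
  obtain ⟨hT1, hT2⟩ := hω
  have hA : Tendsto (fun n => An n ω) atTop (𝓝 Ainf) := by
    refine tendsto_pi_nhds.mpr ?_
    intro jd
    rw [tendsto_pi_nhds]
    intro jd'
    have hscal : ∀ (n : ℕ) (S : Fin K → ℝ),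
        1/(Kr*(n:ℝ)) * (∑ k, S k) = (1/Kr) * (∑ k, S k / (n:ℝ)) := by
      intro n S
      rw [← Finset.sum_div, one_div, one_div, mul_inv, div_eq_mul_inv]
      ring
    have hid : ∀ n : ℕ, An n ω jd jd'
        = (1/Kr) * (∑ k : Fin K, (∑ i ∈ Finset.range n,
            (Hbar jd k + e (jd, k, i) ω) * (Hbar jd' k + e (jd', k, i) ω)) / (n:ℝ))
          + lW * (if jd = jd' then 1 else 0) := by
      intro n
      have hin : ∀ k : Fin K, (∑ l : Fin n, Htil n ω jd (k, l) * Htil n ω jd' (k, l))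
          = ∑ i ∈ Finset.range n, (Hbar jd k + e (jd, k, i) ω)
            * (Hbar jd' k + e (jd', k, i) ω) := by
        intro k
        rw [← Fin.sum_univ_eq_sum_range (fun i => (Hbar jd k + e (jd, k, i) ω)
          * (Hbar jd' k + e (jd', k, i) ω)) n]
        exact Finset.sum_congr rfl fun l _ => by rw [hHtil, hHtil]
      simp only [hAn_def, Matrix.add_apply, Matrix.smul_apply, Matrix.mul_apply,
        Matrix.transpose_apply, Matrix.one_apply, smul_eq_mul]
      rw [Fintype.sum_prod_type]
      rw [Finset.sum_congr rfl (fun k (_ : k ∈ Finset.univ) => hin k), hscal]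
    have hklim : ∀ k : Fin K, Tendsto (fun n : ℕ => (∑ i ∈ Finset.range n,
        (Hbar jd k + e (jd, k, i) ω) * (Hbar jd' k + e (jd', k, i) ω)) / (n:ℝ)) atTop
        (𝓝 (Hbar jd k * Hbar jd' k + (if jd = jd' then σe^2 else 0))) := by
      intro k
      have hexp : (fun n : ℕ => (∑ i ∈ Finset.range n,
          (Hbar jd k + e (jd, k, i) ω) * (Hbar jd' k + e (jd', k, i) ω)) / (n:ℝ))
          =ᶠ[atTop] (fun n : ℕ => Hbar jd k * Hbar jd' k
            + (Hbar jd k * ((∑ i ∈ Finset.range n, e (jd', k, i) ω) / (n:ℝ))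
            + (Hbar jd' k * ((∑ i ∈ Finset.range n, e (jd, k, i) ω) / (n:ℝ))
            + (∑ i ∈ Finset.range n, e (jd, k, i) ω * e (jd', k, i) ω) / (n:ℝ)))) := by
        filter_upwards [eventually_ge_atTop 1] with n hn
        have hnne : ((n:ℝ)) ≠ 0 := Nat.cast_ne_zero.mpr (by omega)
        have hexpand : ∀ i : ℕ, (Hbar jd k + e (jd, k, i) ω) * (Hbar jd' k + e (jd', k, i) ω)
            = Hbar jd k * Hbar jd' k + (Hbar jd k * e (jd', k, i) ω
              + (Hbar jd' k * e (jd, k, i) ω + e (jd, k, i) ω * e (jd', k, i) ω)) := by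
          intro i; ring
        rw [Finset.sum_congr rfl fun i _ => hexpand i]
        rw [Finset.sum_add_distrib, Finset.sum_add_distrib, Finset.sum_add_distrib,
          Finset.sum_const, Finset.card_range, ← Finset.mul_sum, ← Finset.mul_sum,
          nsmul_eq_mul]
        field_simp
      refine Tendsto.congr' hexp.symm ?_
      have hlim := (tendsto_const_nhds (x := Hbar jd k * Hbar jd' k) (f := atTop)).add
        (((hT1 jd' k).const_mul (Hbar jd k)).add
          (((hT1 jd k).const_mul (Hbar jd' k)).add (hT2 jd jd' k)))
      simpa using hlim
    have hsumlim := tendsto_finset_sum (Finset.univ : Finset (Fin K))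
      (fun k (_ : k ∈ Finset.univ) => hklim k)
    have hfull := (hsumlim.const_mul (1/Kr)).add
      (tendsto_const_nhds (x := lW * (if jd = jd' then 1 else 0)) (f := atTop))
    rw [show (fun n : ℕ => An n ω jd jd') = (fun n : ℕ =>
      (1/Kr) * (∑ k : Fin K, (∑ i ∈ Finset.range n,
        (Hbar jd k + e (jd, k, i) ω) * (Hbar jd' k + e (jd', k, i) ω)) / (n:ℝ))
      + lW * (if jd = jd' then 1 else 0)) from funext hid]
    have hval : (1/Kr) * (∑ k : Fin K, (Hbar jd k * Hbar jd' k
        + (if jd = jd' then σe^2 else 0))) + lW * (if jd = jd' then 1 else 0)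
        = Ainf jd jd' := by
      have hAentry : Ainf jd jd' = (1/Kr) * (∑ k : Fin K, Hbar jd k * Hbar jd' k)
          + (σe^2 + lW) * (if jd = jd' then 1 else 0) := by
        simp [hAinf_def, Matrix.add_apply, Matrix.smul_apply, Matrix.mul_apply,
          Matrix.transpose_apply, Matrix.one_apply, smul_eq_mul]
      rw [hAentry, Finset.sum_add_distrib, Finset.sum_const, Finset.card_univ,
        Fintype.card_fin, nsmul_eq_mul]
      rw [mul_add, show (1/Kr) * ((K:ℝ) * (if jd = jd' then σe^2 else 0))
        = (if jd = jd' then σe^2 else 0) from by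
          rw [← hKr_def, ← mul_assoc, one_div, inv_mul_cancel₀ hKrne, one_mul]]
      split_ifs <;> ring
    rw [← hval]
    exact hfull
  have hB : Tendsto (fun n => Bn n ω) atTop (𝓝 Binf) := by
    refine tendsto_pi_nhds.mpr ?_
    intro k
    rw [tendsto_pi_nhds]
    intro jd
    have hid : ∀ n : ℕ, Bn n ω k jd
        = (1/Kr) * ((∑ i ∈ Finset.range n, (Hbar jd k + e (jd, k, i) ω)) / (n:ℝ)) := by
      intro n
      simp only [hBn_def, Matrix.smul_apply, Matrix.mul_apply, Matrix.transpose_apply,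
        Matrix.of_apply, smul_eq_mul]
      rw [Fintype.sum_prod_type]
      have hsel : ∀ k' : Fin K, ∀ l : Fin n,
          (if k' = k then (1:ℝ) else 0) * Htil n ω jd (k', l)
          = if k' = k then Htil n ω jd (k, l) else 0 := by
        intro k' l
        by_cases h : k' = k
        · subst h; simp
        · simp [h]
      rw [Finset.sum_congr rfl (fun k' (_ : k' ∈ Finset.univ) =>
        Finset.sum_congr rfl (fun l _ => hsel k' l))]
      have hpull : ∀ k' : Fin K, (∑ l : Fin n, if k' = k then Htil n ω jd (k, l) else 0)
          = if k' = k then (∑ l : Fin n, Htil n ω jd (k, l)) else 0 := by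
        intro k'; split_ifs <;> simp
      rw [Finset.sum_congr rfl (fun k' (_ : k' ∈ Finset.univ) => hpull k')]
      rw [Finset.sum_ite_eq' Finset.univ k (fun _ => ∑ l : Fin n, Htil n ω jd (k, l))]
      simp only [Finset.mem_univ, if_true]
      rw [show (∑ l : Fin n, Htil n ω jd (k, l))
          = ∑ i ∈ Finset.range n, (Hbar jd k + e (jd, k, i) ω) from by
        rw [← Fin.sum_univ_eq_sum_range (fun i => (Hbar jd k + e (jd, k, i) ω)) n]
        exact Finset.sum_congr rfl fun l _ => by rw [hHtil]]
      rw [one_div, one_div, mul_inv, div_eq_mul_inv]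
      ring
    have hexp : (fun n : ℕ => (∑ i ∈ Finset.range n, (Hbar jd k + e (jd, k, i) ω)) / (n:ℝ))
        =ᶠ[atTop] (fun n : ℕ => Hbar jd k
          + (∑ i ∈ Finset.range n, e (jd, k, i) ω) / (n:ℝ)) := by
      filter_upwards [eventually_ge_atTop 1] with n hn
      have hnne : ((n:ℝ)) ≠ 0 := Nat.cast_ne_zero.mpr (by omega)
      rw [Finset.sum_add_distrib, Finset.sum_const, Finset.card_range, nsmul_eq_mul]
      field_simp
    have hlim : Tendsto (fun n : ℕ => (∑ i ∈ Finset.range n,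
        (Hbar jd k + e (jd, k, i) ω)) / (n:ℝ)) atTop (𝓝 (Hbar jd k)) := by
      refine Tendsto.congr' hexp.symm ?_
      have hadd := (tendsto_const_nhds (x := Hbar jd k) (f := atTop (α := ℕ))).add (hT1 jd k)
      simpa using hadd
    have hfull := hlim.const_mul (1/Kr)
    rw [show (fun n : ℕ => Bn n ω k jd) = (fun n : ℕ => (1/Kr)
      * ((∑ i ∈ Finset.range n, (Hbar jd k + e (jd, k, i) ω)) / (n:ℝ))) from funext hid]
    have hval : (1/Kr) * Hbar jd k = Binf k jd := by
      simp [hBinf_def, Matrix.smul_apply, Matrix.transpose_apply, smul_eq_mul]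
    rw [← hval]
    exact hfull
  have hInv : Tendsto (fun n => (An n ω)⁻¹) atTop (𝓝 Ainf⁻¹) := by
    have hcont : ContinuousAt Inv.inv Ainf := by
      refine continuousAt_matrix_inv Ainf ?_
      rw [Ring.inverse_eq_inv']
      exact continuousAt_inv₀ hdetAinf
    exact hcont.tendsto.comp hA
  have hmulc : Continuous (fun pma : Matrix (Fin K) (Fin d) ℝ × Matrix (Fin d) (Fin d) ℝ =>
      pma.1 * pma.2) := continuous_fst.matrix_mul continuous_snd
  have hconv : Tendsto (fun n => Bn n ω * (An n ω)⁻¹) atTop (𝓝 (Binf * Ainf⁻¹)) :=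
    (hmulc.tendsto (Binf, Ainf⁻¹)).comp (hB.prodMk_nhds hInv)
  rw [show (fun n => What n ω) = fun n => Bn n ω * (An n ω)⁻¹ from
    funext fun n => hWeq n ω]
  rw [← hlimval]
  exact hconv
end
end

section
/- Let K ≥ 2 and c > 0. Define f̃(α, α̃, β) := (1/2)(β·cos α − (K−1)/K)² + ((K−1)/2)(β·cos α̃ + 1/K)² + c·β over the set {(α, α̃, β) : β ≥ 0, −1/(K−1) ≤ cos α̃ ≤ 1}. Then: (i) if c > 1, the infimum of f̃ over this set equals (K−1)/(2K) and is attained exactly when β = 0; (ii) if c ≤ 1, the infimum equals ((K−1)/K)·(c − (1/2)c²) and is attained at (α, α̃, β) = (0, arccos(−1/(K−1)), (1−c)(K−1)/K). -/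
noncomputable section

private lemma key_decomp (Kr c x y β : ℝ) (hK1 : 1 ≤ Kr - 1) :
    (1 / 2 * (x - (Kr - 1) / Kr) ^ 2 + (Kr - 1) / 2 * (y + 1 / Kr) ^ 2 + c * β)
      - ((Kr - 1) / (2 * Kr) + (c - 1) * β)
    = 1 / 2 * x ^ 2 + (Kr - 1) / 2 * y ^ 2 + (Kr - 1) / Kr * (β - x)
        + ((Kr - 1) * y + β) / Kr := by
  have hK0 : Kr ≠ 0 := by intro h; rw [h] at hK1; norm_num at hK1
  field_simp
  ring

private lemma key1 (Kr c x y β : ℝ) (hK1 : 1 ≤ Kr - 1)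
    (hx : x ≤ β) (hy : 0 ≤ (Kr - 1) * y + β) :
    (Kr - 1) / (2 * Kr) + (c - 1) * β
      ≤ 1 / 2 * (x - (Kr - 1) / Kr) ^ 2 + (Kr - 1) / 2 * (y + 1 / Kr) ^ 2 + c * β := by
  have hK0 : (0:ℝ) < Kr := by linarith
  have t1 : (0:ℝ) ≤ 1 / 2 * x ^ 2 := by positivity
  have t2 : (0:ℝ) ≤ (Kr - 1) / 2 * y ^ 2 := by
    apply mul_nonneg (by linarith) (sq_nonneg y)
  have t3 : (0:ℝ) ≤ (Kr - 1) / Kr * (β - x) :=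
    mul_nonneg (div_nonneg (by linarith) hK0.le) (by linarith)
  have t4 : (0:ℝ) ≤ ((Kr - 1) * y + β) / Kr := div_nonneg hy hK0.le
  have h := key_decomp Kr c x y β hK1
  linarith

private lemma key2 (Kr c x y β : ℝ) (hK1 : 1 ≤ Kr - 1) (hc0 : 0 < c) (hc1 : c ≤ 1)
    (hx : x ≤ β) (hy : 0 ≤ (Kr - 1) * y + β) :
    (Kr - 1) / Kr * (c - 1 / 2 * c ^ 2)
      ≤ 1 / 2 * (x - (Kr - 1) / Kr) ^ 2 + (Kr - 1) / 2 * (y + 1 / Kr) ^ 2 + c * β := by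
  have hK0 : (0:ℝ) < Kr := by linarith
  have hK0' : Kr ≠ 0 := ne_of_gt hK0
  have hdec : (1 / 2 * (x - (Kr - 1) / Kr) ^ 2 + (Kr - 1) / 2 * (y + 1 / Kr) ^ 2 + c * β)
      - (Kr - 1) / Kr * (c - 1 / 2 * c ^ 2)
      = 1 / 2 * (x - (1 - c) * (Kr - 1) / Kr) ^ 2
        + (Kr - 1) / 2 * (y + (1 - c) / Kr) ^ 2
        + c * (Kr - 1) / Kr * (β - x)
        + c * ((Kr - 1) * y + β) / Kr := by
    field_simp
    ring
  have t1 : (0:ℝ) ≤ 1 / 2 * (x - (1 - c) * (Kr - 1) / Kr) ^ 2 := by positivity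
  have t2 : (0:ℝ) ≤ (Kr - 1) / 2 * (y + (1 - c) / Kr) ^ 2 :=
    mul_nonneg (by linarith) (sq_nonneg _)
  have t3 : (0:ℝ) ≤ c * (Kr - 1) / Kr * (β - x) :=
    mul_nonneg (div_nonneg (mul_nonneg hc0.le (by linarith)) hK0.le) (by linarith)
  have t4 : (0:ℝ) ≤ c * ((Kr - 1) * y + β) / Kr :=
    div_nonneg (mul_nonneg hc0.le hy) hK0.le
  linarith

/-- **Lemma 2** (scalar reduction of the unregularized-bias UFM analysis).
Let `f̃(α,α̃,β) = (1/2)(β cos α − (K−1)/K)² + ((K−1)/2)(β cos α̃ + 1/K)² + cβ`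
over `{β ≥ 0, −1/(K−1) ≤ cos α̃ ≤ 1}`, for `K ≥ 2` and `c > 0`.
(i) If `c > 1`, the infimum is `(K−1)/(2K)`, attained exactly when `β = 0`.
(ii) If `c ≤ 1`, the infimum is `((K−1)/K)(c − c²/2)`, attained at
`(α,α̃,β) = (0, arccos(−1/(K−1)), (1−c)(K−1)/K)`. -/
theorem scalar_reduction_unregBias
    (K : ℕ) (hK : 2 ≤ K) (c : ℝ) (hc : 0 < c)
    (ft : ℝ → ℝ → ℝ → ℝ)
    (hft : ∀ α α' β, ft α α' β =
      1 / 2 * (β * Real.cos α - ((K : ℝ) - 1) / (K : ℝ)) ^ 2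
        + ((K : ℝ) - 1) / 2 * (β * Real.cos α' + 1 / (K : ℝ)) ^ 2 + c * β) :
    (1 < c →
      ∀ α α' β, 0 ≤ β → -(1 / ((K : ℝ) - 1)) ≤ Real.cos α' → Real.cos α' ≤ 1 →
        ((K : ℝ) - 1) / (2 * (K : ℝ)) ≤ ft α α' β ∧
        (ft α α' β = ((K : ℝ) - 1) / (2 * (K : ℝ)) ↔ β = 0)) ∧
    (c ≤ 1 →
      (∀ α α' β, 0 ≤ β → -(1 / ((K : ℝ) - 1)) ≤ Real.cos α' → Real.cos α' ≤ 1 →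
        ((K : ℝ) - 1) / (K : ℝ) * (c - 1 / 2 * c ^ 2) ≤ ft α α' β) ∧
      ft 0 (Real.arccos (-(1 / ((K : ℝ) - 1)))) ((1 - c) * ((K : ℝ) - 1) / (K : ℝ))
        = ((K : ℝ) - 1) / (K : ℝ) * (c - 1 / 2 * c ^ 2)) := by
  have hK2 : (2:ℝ) ≤ (K : ℝ) := by exact_mod_cast hK
  have hK1 : (1:ℝ) ≤ (K : ℝ) - 1 := by linarith
  have hK0 : (0:ℝ) < (K : ℝ) := by linarith
  have hKm1 : ((K : ℝ) - 1) ≠ 0 := by linarith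
  -- generic facts about x and y
  have hxy : ∀ α' β : ℝ, 0 ≤ β → -(1 / ((K : ℝ) - 1)) ≤ Real.cos α' →
      0 ≤ ((K : ℝ) - 1) * (β * Real.cos α') + β := by
    intro α' β hβ hlo
    have h1 : β * (-(1 / ((K : ℝ) - 1))) ≤ β * Real.cos α' :=
      mul_le_mul_of_nonneg_left hlo hβ
    have h2 : ((K : ℝ) - 1) * (β * (-(1 / ((K : ℝ) - 1)))) = -β := by
      field_simp
    nlinarith [mul_le_mul_of_nonneg_left h1 (by linarith : (0:ℝ) ≤ (K : ℝ) - 1)]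
  have hxle : ∀ α β : ℝ, 0 ≤ β → β * Real.cos α ≤ β := by
    intro α β hβ
    nlinarith [Real.cos_le_one α]
  constructor
  · intro hc1 α α' β hβ hlo hhi
    have hx := hxle α β hβ
    have hy := hxy α' β hβ hlo
    have hkey := key1 ((K : ℝ)) c (β * Real.cos α) (β * Real.cos α') β hK1 hx hy
    rw [hft]
    constructor
    · nlinarith [mul_nonneg (by linarith : (0:ℝ) ≤ c - 1) hβ]
    · constructor
      · intro heq
        have : (c - 1) * β ≤ 0 := by linarith
        nlinarith
      · intro hβ0
        subst hβ0
        field_simp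
        ring
  · intro hc1
    constructor
    · intro α α' β hβ hlo hhi
      have hx := hxle α β hβ
      have hy := hxy α' β hβ hlo
      have hkey := key2 ((K : ℝ)) c (β * Real.cos α) (β * Real.cos α') β hK1 hc hc1 hx hy
      rw [hft]
      linarith
    · rw [hft, Real.cos_zero, Real.cos_arccos (by rw [neg_le, neg_neg]; rw [div_le_one (by linarith)]; linarith)
        (by have h : (0:ℝ) < 1/((K:ℝ)-1) := by positivity
            linarith)]
      field_simp
      ring
end
end

section
/- Let d ≥ 1, K ≥ 1, n ≥ 1, λ_W > 0, λ_H > 0. Any global minimizer (W*, H*) of f(W,H) := (1/(2Kn))‖WH − Y‖_F² + (λ_W/2)‖W‖_F² + (λ_H/2)‖H‖_F² over W ∈ ℝ^{K×d}, H ∈ ℝ^{d×Kn} has zero within-class variability: for every class k ∈ [K] and every pair of indices i₁, i₂ ∈ [n], the columns satisfy h*_{k,i₁} = h*_{k,i₂}; equivalently, H* = H̄ ⊗ 1_nᵀ for some H̄ ∈ ℝ^{d×K}. (This follows because, by strict convexity of the squared norm and Jensen's inequality, f(W,H) ≥ f(W, H̄ ⊗ 1_nᵀ) with H̄ the matrix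 of class means, with equality iff all within-class columns coincide.) -/
open Matrix Finset

noncomputable section

lemma avg_sum_sq_id {n : ℕ} (hn : 1 ≤ n) (x : Fin n → ℝ) :
    ∑ i : Fin n, (x i)^2 - ∑ i : Fin n, ((∑ i', x i') / n)^2
      = ∑ i : Fin n, (x i - (∑ i', x i') / n)^2 := by
  have hn' : (0:ℝ) < n := by exact_mod_cast hn
  set a : ℝ := (∑ i', x i') / n with ha
  have hs : ∑ i, x i = (n:ℝ) * a := by
    rw [ha]; field_simp
  have h1 : ∀ i : Fin n, (x i - a)^2 = (x i)^2 - 2*a*(x i) + a^2 := by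
    intro i; ring
  simp_rw [h1]
  rw [Finset.sum_add_distrib, Finset.sum_sub_distrib, ← Finset.mul_sum, hs]
  simp only [Finset.sum_const, Finset.card_univ, Fintype.card_fin, nsmul_eq_mul]
  ring

lemma avg_le {n : ℕ} (hn : 1 ≤ n) (x : Fin n → ℝ) :
    ∑ i : Fin n, ((∑ i', x i') / n)^2 ≤ ∑ i, (x i)^2 := by
  have hid := avg_sum_sq_id hn x
  have hnn : (0:ℝ) ≤ ∑ i : Fin n, (x i - (∑ i', x i') / n)^2 :=
    Finset.sum_nonneg fun i _ => sq_nonneg _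
  linarith

lemma avg_lt {n : ℕ} (hn : 1 ≤ n) (x : Fin n → ℝ) {i₁ i₂ : Fin n} (hne : x i₁ ≠ x i₂) :
    ∑ i : Fin n, ((∑ i', x i') / n)^2 < ∑ i, (x i)^2 := by
  have hid := avg_sum_sq_id hn x
  set a : ℝ := (∑ i', x i') / n with ha
  have hex : ∃ i, x i ≠ a := by
    by_contra h
    push_neg at h
    exact hne ((h i₁).trans (h i₂).symm)
  obtain ⟨i, hi⟩ := hex
  have hpos : 0 < ∑ i : Fin n, (x i - a)^2 :=
    Finset.sum_pos' (fun j _ => sq_nonneg _)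
      ⟨i, Finset.mem_univ i, by
        have : x i - a ≠ 0 := sub_ne_zero.mpr hi
        positivity⟩
  linarith

/-- Any global minimizer of the bias-free regularized-MSE UFM objective has zero
within-class variability: all columns of each class coincide; equivalently
`H* = H̄ ⊗ 1_nᵀ` for some `H̄ ∈ ℝ^{d×K}`. -/
theorem ufm_minimizer_zero_within_class_variability
    (d K n : ℕ) (hd : 1 ≤ d) (hK : 1 ≤ K) (hn : 1 ≤ n)
    (lW lH : ℝ) (hlW : 0 < lW) (hlH : 0 < lH)
    (Y : Matrix (Fin K) (Fin K × Fin n) ℝ)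
    (hY : ∀ k p, Y k p = if p.1 = k then 1 else 0)
    (f : Matrix (Fin K) (Fin d) ℝ → Matrix (Fin d) (Fin K × Fin n) ℝ → ℝ)
    (hf : ∀ W H, f W H =
      1 / (2 * (K : ℝ) * (n : ℝ)) * frobSq (W * H - Y)
        + lW / 2 * frobSq W + lH / 2 * frobSq H)
    (Ws : Matrix (Fin K) (Fin d) ℝ) (Hs : Matrix (Fin d) (Fin K × Fin n) ℝ)
    (hmin : ∀ W H, f Ws Hs ≤ f W H) :
    (∀ (k : Fin K) (i₁ i₂ : Fin n) (j : Fin d), Hs j (k, i₁) = Hs j (k, i₂)) ∧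
    (∃ Hbar : Matrix (Fin d) (Fin K) ℝ,
      ∀ (j : Fin d) (k : Fin K) (i : Fin n), Hs j (k, i) = Hbar j k) := by
  by_cases hall : ∀ (k : Fin K) (i₁ i₂ : Fin n) (j : Fin d), Hs j (k, i₁) = Hs j (k, i₂)
  · exact ⟨hall, ⟨fun j k => Hs j (k, ⟨0, hn⟩), fun j k i => hall k i ⟨0, hn⟩ j⟩⟩
  · exfalso
    push_neg at hall
    obtain ⟨k₀, i₁, i₂, j₀, hne⟩ := hall
    have hn' : (0:ℝ) < n := by exact_mod_cast hn
    have hK' : (0:ℝ) < K := by exact_mod_cast hK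
    set H' : Matrix (Fin d) (Fin K × Fin n) ℝ :=
      fun j p => (∑ i, Hs j (p.1, i)) / n with hH'
    -- strict decrease of the H regularizer
    have hHreg : frobSq H' < frobSq Hs := by
      unfold frobSq
      simp_rw [Fintype.sum_prod_type]
      refine Finset.sum_lt_sum (fun j _ => ?_) ⟨j₀, Finset.mem_univ _, ?_⟩
      · exact Finset.sum_le_sum fun k _ => avg_le hn (fun i => Hs j (k, i))
      · refine Finset.sum_lt_sum (fun k _ => avg_le hn (fun i => Hs j₀ (k, i)))
          ⟨k₀, Finset.mem_univ _, avg_lt hn (fun i => Hs j₀ (k₀, i)) hne⟩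
    -- weak decrease of the fit term
    have hfit : frobSq (Ws * H' - Y) ≤ frobSq (Ws * Hs - Y) := by
      unfold frobSq
      simp_rw [Fintype.sum_prod_type]
      refine Finset.sum_le_sum fun k' _ => Finset.sum_le_sum fun k _ => ?_
      have hentry : ∀ i : Fin n,
          (Ws * H' - Y) k' (k, i)
            = (∑ i' : Fin n, (Ws * Hs - Y) k' (k, i')) / n := by
        intro i
        have hswap : ∑ j, Ws k' j * ((∑ i', Hs j (k, i')) / (n:ℝ))
            = (∑ i', ∑ j, Ws k' j * Hs j (k, i')) / n := by
          rw [Finset.sum_comm, Finset.sum_div]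
          refine Finset.sum_congr rfl fun j _ => ?_
          rw [← Finset.mul_sum]
          ring
        have hconst : ∑ _i' : Fin n, (if k = k' then (1:ℝ) else 0)
            = (n:ℝ) * (if k = k' then (1:ℝ) else 0) := by
          rw [Finset.sum_const, Finset.card_univ, Fintype.card_fin, nsmul_eq_mul]
        simp only [Matrix.sub_apply, Matrix.mul_apply, hY]
        simp only [hH']
        rw [Finset.sum_sub_distrib, hconst, hswap]
        field_simp
      calc ∑ i : Fin n, ((Ws * H' - Y) k' (k, i))^2
          = ∑ i : Fin n, ((∑ i' : Fin n, (Ws * Hs - Y) k' (k, i')) / n)^2 := by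
            refine Finset.sum_congr rfl fun i _ => by rw [hentry i]
        _ ≤ ∑ i : Fin n, ((Ws * Hs - Y) k' (k, i))^2 :=
            avg_le hn (fun i => (Ws * Hs - Y) k' (k, i))
    have hlt : f Ws H' < f Ws Hs := by
      rw [hf, hf]
      have hc : (0:ℝ) < 1 / (2 * (K:ℝ) * n) := by positivity
      nlinarith [mul_le_mul_of_nonneg_left hfit (le_of_lt hc),
        mul_lt_mul_of_pos_left hHreg (by positivity : (0:ℝ) < lH / 2)]
    exact absurd (hmin Ws H') (not_le.mpr hlt)

end
end

section
/- Let d ≥ K ≥ 1, n ≥ 1, λ_W > 0, λ_H > 0. Let H̄ = U·S·Vᵀ ∈ ℝ^{d×K}, where U ∈ ℝ^{d×K} satisfies UᵀU = I_K, V ∈ ℝ^{K×K} is orthogonal, and S = diag(s₁, …, s_K) with s_k ≥ 0. Define W := H̄ᵀ·(H̄H̄ᵀ + Kλ_W·I_d)^{−1}. Then (1/(2K))‖W·H̄ − I_K‖_F² + (λ_W/2)‖W‖_F² + (nλ_H/2)‖H̄‖_F² = Σ_{k=1}^K ( λ_W/(2(s_k² + Kλ_W)) + (nλ_H/2)·s_k²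 ). -/
open Matrix Finset

noncomputable section

lemma frobSq_eq_trace {m n : Type*} [Fintype m] [Fintype n] (A : Matrix m n ℝ) :
    frobSq A = Matrix.trace (Aᵀ * A) := by
  simp only [frobSq, Matrix.trace, Matrix.diag, Matrix.mul_apply, Matrix.transpose_apply, sq]
  exact Finset.sum_comm

lemma frobSq_conj {m n : Type*} [Fintype m] [Fintype n] {K : ℕ}
    (P : Matrix m (Fin K) ℝ) (hP : Pᵀ * P = 1)
    (Q : Matrix n (Fin K) ℝ) (hQ : Qᵀ * Q = 1) (f : Fin K → ℝ) :
    frobSq (P * Matrix.diagonal f * Qᵀ) = ∑ k, (f k) ^ 2 := by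
  rw [frobSq_eq_trace]
  have ht : (P * Matrix.diagonal f * Qᵀ)ᵀ = Q * (Matrix.diagonal f * Pᵀ) := by
    simp [Matrix.transpose_mul, Matrix.mul_assoc]
  have h1 : (P * Matrix.diagonal f * Qᵀ)ᵀ * (P * Matrix.diagonal f * Qᵀ)
      = Q * (Matrix.diagonal f * Matrix.diagonal f) * Qᵀ := by
    rw [ht]
    calc Q * (Matrix.diagonal f * Pᵀ) * (P * Matrix.diagonal f * Qᵀ)
        = Q * (Matrix.diagonal f * ((Pᵀ * P) * (Matrix.diagonal f * Qᵀ))) := by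
          simp only [Matrix.mul_assoc]
      _ = Q * (Matrix.diagonal f * (Matrix.diagonal f * Qᵀ)) := by rw [hP, Matrix.one_mul]
      _ = Q * (Matrix.diagonal f * Matrix.diagonal f) * Qᵀ := by simp only [Matrix.mul_assoc]
  rw [h1, Matrix.trace_mul_cycle, ← Matrix.mul_assoc, hQ, Matrix.one_mul,
    Matrix.diagonal_mul_diagonal, Matrix.trace_diagonal]
  exact Finset.sum_congr rfl fun k _ => (sq (f k)).symm

lemma inv_helper {d K : ℕ} (U : Matrix (Fin d) (Fin K) ℝ) (hU : Uᵀ * U = 1)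
    (a : ℝ) (ha : a ≠ 0) (f g : Fin K → ℝ)
    (hfg : ∀ k, (1/a) * f k + f k * g k + a * g k = 0) :
    (U * Matrix.diagonal f * Uᵀ + a • 1) * ((1/a) • (1 : Matrix (Fin d) (Fin d) ℝ)
      + U * Matrix.diagonal g * Uᵀ) = 1 := by
  have hAB : U * Matrix.diagonal f * Uᵀ * (U * Matrix.diagonal g * Uᵀ)
      = U * Matrix.diagonal (fun k => f k * g k) * Uᵀ := by
    calc U * Matrix.diagonal f * Uᵀ * (U * Matrix.diagonal g * Uᵀ)
        = U * (Matrix.diagonal f * ((Uᵀ * U) * (Matrix.diagonal g * Uᵀ))) := by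
          simp only [Matrix.mul_assoc]
      _ = U * (Matrix.diagonal f * (Matrix.diagonal g * Uᵀ)) := by rw [hU, Matrix.one_mul]
      _ = U * Matrix.diagonal (fun k => f k * g k) * Uᵀ := by
          rw [← Matrix.mul_assoc (Matrix.diagonal f), Matrix.diagonal_mul_diagonal,
            ← Matrix.mul_assoc]
  have hdiag : Matrix.diagonal (fun k => (1/a) * f k + f k * g k + a * g k)
      = (1/a) • Matrix.diagonal f + Matrix.diagonal (fun k => f k * g k)
        + a • Matrix.diagonal g := by
    ext i j
    by_cases h : i = j <;> simp [Matrix.diagonal_apply, h]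
  have hzero : Matrix.diagonal (fun k => (1/a) * f k + f k * g k + a * g k)
      = (0 : Matrix (Fin K) (Fin K) ℝ) := by
    have he : (fun k => (1/a) * f k + f k * g k + a * g k) = fun _ => (0 : ℝ) := funext hfg
    rw [he, Matrix.diagonal_zero]
  have hcomb : (1/a) • (U * Matrix.diagonal f * Uᵀ)
      + U * Matrix.diagonal (fun k => f k * g k) * Uᵀ
      + a • (U * Matrix.diagonal g * Uᵀ) = 0 := by
    calc (1/a) • (U * Matrix.diagonal f * Uᵀ)
          + U * Matrix.diagonal (fun k => f k * g k) * Uᵀ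
          + a • (U * Matrix.diagonal g * Uᵀ)
        = U * ((1/a) • Matrix.diagonal f + Matrix.diagonal (fun k => f k * g k)
            + a • Matrix.diagonal g) * Uᵀ := by
          simp [Matrix.mul_add, Matrix.add_mul, Matrix.mul_smul, Matrix.smul_mul]
      _ = U * (0 : Matrix (Fin K) (Fin K) ℝ) * Uᵀ := by rw [← hdiag, hzero]
      _ = 0 := by simp
  rw [Matrix.add_mul, Matrix.mul_add, Matrix.mul_add, hAB, Matrix.mul_smul, Matrix.mul_one]
  simp only [Matrix.smul_mul, Matrix.one_mul, smul_smul]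
  rw [mul_one_div_cancel ha, one_smul]
  calc (1/a) • (U * Matrix.diagonal f * Uᵀ) + U * Matrix.diagonal (fun k => f k * g k) * Uᵀ
        + ((1 : Matrix (Fin d) (Fin d) ℝ) + a • (U * Matrix.diagonal g * Uᵀ))
      = (1/a) • (U * Matrix.diagonal f * Uᵀ) + U * Matrix.diagonal (fun k => f k * g k) * Uᵀ
        + a • (U * Matrix.diagonal g * Uᵀ) + 1 := by abel
    _ = 1 := by rw [hcomb, zero_add]

/-- The objective value of the bias-free UFM at `(W(H̄), H̄)`, where
`H̄ = U·diag(s)·Vᵀ` is an SVD and `W = H̄ᵀ(H̄H̄ᵀ + Kλ_W I_d)⁻¹` is the ridge-optimal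
weight matrix, is a separable function of the singular values:
`(1/(2K))‖WH̄ − I_K‖_F² + (λ_W/2)‖W‖_F² + (nλ_H/2)‖H̄‖_F²
  = Σ_k ( λ_W/(2(s_k² + Kλ_W)) + (nλ_H/2)s_k² )`. -/
theorem objective_in_terms_of_singular_values
    (d K : ℕ) (hK : 1 ≤ K) (hd : K ≤ d) (n : ℕ) (hn : 1 ≤ n)
    (lW lH : ℝ) (hlW : 0 < lW) (hlH : 0 < lH)
    (U : Matrix (Fin d) (Fin K) ℝ) (hU : Uᵀ * U = 1)
    (V : Matrix (Fin K) (Fin K) ℝ) (hV : Vᵀ * V = 1)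
    (s : Fin K → ℝ) (hs : ∀ k, 0 ≤ s k)
    (Hbar : Matrix (Fin d) (Fin K) ℝ)
    (hHbar : Hbar = U * Matrix.diagonal s * Vᵀ)
    (W : Matrix (Fin K) (Fin d) ℝ)
    (hW : W = Hbarᵀ * (Hbar * Hbarᵀ + ((K : ℝ) * lW) • (1 : Matrix (Fin d) (Fin d) ℝ))⁻¹) :
    1 / (2 * (K : ℝ)) * frobSq (W * Hbar - 1) + lW / 2 * frobSq W
        + ((n : ℝ) * lH) / 2 * frobSq Hbar
      = ∑ k, (lW / (2 * ((s k) ^ 2 + (K : ℝ) * lW)) + (n : ℝ) * lH / 2 * (s k) ^ 2) := by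
  have hK0 : (0 : ℝ) < (K : ℝ) := by exact_mod_cast hK
  set a : ℝ := (K : ℝ) * lW with ha_def
  have ha : 0 < a := mul_pos hK0 hlW
  have hsa : ∀ k, (s k) ^ 2 + a ≠ 0 := fun k => by positivity
  have hVV : V * Vᵀ = 1 := mul_eq_one_comm.mp hV
  have hHt : Hbarᵀ = V * Matrix.diagonal s * Uᵀ := by
    rw [hHbar]
    simp [Matrix.transpose_mul, Matrix.diagonal_transpose, Matrix.mul_assoc]
  -- H Hᵀ = U diag(s²) Uᵀ
  have hHHt : Hbar * Hbarᵀ = U * Matrix.diagonal (fun k => (s k) ^ 2) * Uᵀ := by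
    rw [hHt, hHbar]
    calc U * Matrix.diagonal s * Vᵀ * (V * Matrix.diagonal s * Uᵀ)
        = U * (Matrix.diagonal s * ((Vᵀ * V) * (Matrix.diagonal s * Uᵀ))) := by
          simp only [Matrix.mul_assoc]
      _ = U * (Matrix.diagonal s * (Matrix.diagonal s * Uᵀ)) := by rw [hV, Matrix.one_mul]
      _ = U * Matrix.diagonal (fun k => (s k) ^ 2) * Uᵀ := by
          rw [← Matrix.mul_assoc (Matrix.diagonal s), Matrix.diagonal_mul_diagonal,
            ← Matrix.mul_assoc]
          congr 2
          exact congrArg _ (funext fun k => (sq (s k)).symm)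
  set g : Fin K → ℝ := fun k => -((s k) ^ 2) / (a * ((s k) ^ 2 + a)) with hg_def
  set N : Matrix (Fin d) (Fin d) ℝ :=
    (1/a) • (1 : Matrix (Fin d) (Fin d) ℝ) + U * Matrix.diagonal g * Uᵀ with hN_def
  have hright : (Hbar * Hbarᵀ + a • 1) * N = 1 := by
    rw [hHHt]
    refine inv_helper U hU a (ne_of_gt ha) _ g fun k => ?_
    simp only [hg_def]
    field_simp [hg_def, hsa k]
    ring
  have hInv : (Hbar * Hbarᵀ + a • (1 : Matrix (Fin d) (Fin d) ℝ))⁻¹ = N :=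
    Matrix.inv_eq_right_inv hright
  -- explicit form of W
  have hWf : W = V * Matrix.diagonal (fun k => s k / ((s k) ^ 2 + a)) * Uᵀ := by
    rw [hW, hInv, hHt, hN_def]
    rw [Matrix.mul_add, Matrix.mul_smul, Matrix.mul_one]
    have h2 : V * Matrix.diagonal s * Uᵀ * (U * Matrix.diagonal g * Uᵀ)
        = V * Matrix.diagonal (fun k => s k * g k) * Uᵀ := by
      calc V * Matrix.diagonal s * Uᵀ * (U * Matrix.diagonal g * Uᵀ)
          = V * (Matrix.diagonal s * ((Uᵀ * U) * (Matrix.diagonal g * Uᵀ))) := by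
            simp only [Matrix.mul_assoc]
        _ = V * (Matrix.diagonal s * (Matrix.diagonal g * Uᵀ)) := by rw [hU, Matrix.one_mul]
        _ = V * Matrix.diagonal (fun k => s k * g k) * Uᵀ := by
            rw [← Matrix.mul_assoc (Matrix.diagonal s), Matrix.diagonal_mul_diagonal,
              ← Matrix.mul_assoc]
    rw [h2]
    have h3 : (1/a) • (V * Matrix.diagonal s * Uᵀ) + V * Matrix.diagonal (fun k => s k * g k) * Uᵀ
        = V * ((1/a) • Matrix.diagonal s + Matrix.diagonal (fun k => s k * g k)) * Uᵀ := by
      simp [Matrix.mul_add, Matrix.add_mul, Matrix.mul_smul, Matrix.smul_mul]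
    rw [h3]
    congr 2
    ext i j
    by_cases h : i = j
    · subst h
      simp only [Matrix.add_apply, Matrix.smul_apply, Matrix.diagonal_apply_eq, smul_eq_mul,
        hg_def]
      field_simp [hsa i]
      ring
    · simp [Matrix.diagonal_apply_ne _ h, h]
  -- explicit form of W * Hbar - 1
  have hWH : W * Hbar - 1 = V * Matrix.diagonal (fun k => (s k) ^ 2 / ((s k) ^ 2 + a) - 1) * Vᵀ := by
    have h4 : W * Hbar = V * Matrix.diagonal (fun k => (s k) ^ 2 / ((s k) ^ 2 + a)) * Vᵀ := by
      rw [hWf, hHbar]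
      calc V * Matrix.diagonal (fun k => s k / ((s k) ^ 2 + a)) * Uᵀ
            * (U * Matrix.diagonal s * Vᵀ)
          = V * (Matrix.diagonal (fun k => s k / ((s k) ^ 2 + a))
              * ((Uᵀ * U) * (Matrix.diagonal s * Vᵀ))) := by simp only [Matrix.mul_assoc]
        _ = V * (Matrix.diagonal (fun k => s k / ((s k) ^ 2 + a))
              * (Matrix.diagonal s * Vᵀ)) := by rw [hU, Matrix.one_mul]
        _ = V * Matrix.diagonal (fun k => (s k) ^ 2 / ((s k) ^ 2 + a)) * Vᵀ := by
            rw [← Matrix.mul_assoc (Matrix.diagonal _), Matrix.diagonal_mul_diagonal,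
              ← Matrix.mul_assoc]
            congr 2
            refine congrArg _ (funext fun k => ?_)
            rw [div_mul_eq_mul_div, sq]
    have h5 : (1 : Matrix (Fin K) (Fin K) ℝ)
        = V * Matrix.diagonal (fun _ => (1 : ℝ)) * Vᵀ := by
      rw [Matrix.diagonal_one, Matrix.mul_one, hVV]
    rw [h4]
    nth_rewrite 1 [h5]
    rw [← Matrix.sub_mul, ← Matrix.mul_sub, Matrix.diagonal_sub]
  rw [hWH, hWf, hHbar,
    frobSq_conj V hV V hV, frobSq_conj V hV U hU, frobSq_conj U hU V hV,
    Finset.mul_sum, Finset.mul_sum, Finset.mul_sum, ← Finset.sum_add_distrib,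
    ← Finset.sum_add_distrib]
  refine Finset.sum_congr rfl fun k _ => ?_
  have h6 := hsa k
  have hK0' : (K : ℝ) ≠ 0 := ne_of_gt hK0
  field_simp [ha_def]
  ring
end
end

section
/- Let K ≥ 1, d ≥ K, n ≥ 1, and λ_{W2}, λ_{W1}, λ_{H1} > 0. Then the infimum over (W₂, W₁, H̄₁) ∈ ℝ^{K×d} × ℝ^{d×d} × ℝ^{d×K} of (1/(2K))‖W₂W₁H̄₁ − I_K‖_F² + (λ_{W2}/2)‖W₂‖_F² + (λ_{W1}/2)‖W₁‖_F² + (nλ_{H1}/2)‖H̄₁‖_F² equals the infimum over (W₂, H̄) ∈ ℝ^{K×d} × ℝ^{d×K} of (1/(2K))‖W₂H̄ − I_K‖_F² + (λ_{W2}/2)‖W₂‖_F² + √(n·λ_{W1}·λ_{H1})·‖H̄‖_*. -/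
open Matrix Finset

noncomputable section

/-- Nuclear norm of a real matrix: trace of the PSD square root of `ZᵀZ`
(= `ZᴴZ` over `ℝ`), i.e., the sum of the singular values. -/
def nuclearNorm {m n : Type*} [Fintype m] [Fintype n] [DecidableEq n]
    (Z : Matrix m n ℝ) : ℝ :=
  ((Matrix.posSemidef_conjTranspose_mul_self Z).1.eigenvectorUnitary.1 *
      diagonal (Real.sqrt ∘ (Matrix.posSemidef_conjTranspose_mul_self Z).1.eigenvalues) *
      (star (Matrix.posSemidef_conjTranspose_mul_self Z).1.eigenvectorUnitary : Matrix n n ℝ)).trace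

namespace NuclearAux

variable {m n : Type*} [Fintype m] [Fintype n]

lemma frobSq_nonneg (A : Matrix m n ℝ) : 0 ≤ frobSq A :=
  Finset.sum_nonneg fun _ _ => Finset.sum_nonneg fun _ _ => sq_nonneg _

lemma frobSq_eq_trace (A : Matrix m n ℝ) : frobSq A = (Aᴴ * A).trace := by
  rw [frobSq, Matrix.trace]
  simp only [Matrix.diag, Matrix.mul_apply, Matrix.conjTranspose_apply, RCLike.star_def,
    starRingEnd_apply, star_trivial, sq]
  exact Finset.sum_comm

lemma frobSq_smul (c : ℝ) (A : Matrix m n ℝ) : frobSq (c • A) = c ^ 2 * frobSq A := by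
  simp [frobSq, Finset.mul_sum, mul_pow]

variable [DecidableEq n]

/-- eigenvector unitary of `ZᴴZ` -/
def specV (Z : Matrix m n ℝ) : Matrix n n ℝ :=
  ((Matrix.posSemidef_conjTranspose_mul_self Z).1.eigenvectorUnitary : Matrix n n ℝ)

def specμ (Z : Matrix m n ℝ) : n → ℝ :=
  (Matrix.posSemidef_conjTranspose_mul_self Z).1.eigenvalues

lemma specμ_nonneg (Z : Matrix m n ℝ) (j : n) : 0 ≤ specμ Z j :=
  (Matrix.posSemidef_conjTranspose_mul_self Z).eigenvalues_nonneg j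

lemma specV_mul_star (Z : Matrix m n ℝ) : specV Z * star (specV Z) = 1 :=
  Matrix.mem_unitaryGroup_iff.mp
    ((Matrix.posSemidef_conjTranspose_mul_self Z).1.eigenvectorUnitary).2

lemma star_mul_specV (Z : Matrix m n ℝ) : star (specV Z) * specV Z = 1 :=
  Matrix.mem_unitaryGroup_iff'.mp
    ((Matrix.posSemidef_conjTranspose_mul_self Z).1.eigenvectorUnitary).2

lemma BtB (Z : Matrix m n ℝ) :
    (Z * specV Z)ᴴ * (Z * specV Z) = diagonal (specμ Z) := by
  have h := (Matrix.posSemidef_conjTranspose_mul_self Z).1.conjStarAlgAut_star_eigenvectorUnitary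
  simp only [Unitary.conjStarAlgAut_apply, star_star, Unitary.coe_star] at h
  rw [Matrix.conjTranspose_mul]
  calc (specV Z)ᴴ * Zᴴ * (Z * specV Z)
      = star (specV Z) * (Zᴴ * Z) * specV Z := by
        simp only [Matrix.star_eq_conjTranspose, Matrix.mul_assoc]
    _ = diagonal (specμ Z) := by
        unfold specV specμ; rw [h]; ext j k; simp [Matrix.diagonal]

lemma col_zero (Z : Matrix m n ℝ) {j : n} (hj : specμ Z j = 0) (i : m) :
    (Z * specV Z) i j = 0 := by
  have h := congrFun (congrFun (BtB Z) j) j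
  simp only [Matrix.mul_apply, Matrix.conjTranspose_apply, star_trivial,
    Matrix.diagonal_apply_eq, hj] at h
  have := Finset.sum_eq_zero_iff_of_nonneg
    (fun i _ => mul_self_nonneg ((Z * specV Z) i j)) |>.mp h i (Finset.mem_univ i)
  exact mul_self_eq_zero.mp this

lemma mul_diagonal_congr (Z : Matrix m n ℝ) (g g' : n → ℝ)
    (h : ∀ j, specμ Z j ≠ 0 → g j = g' j) :
    (Z * specV Z) * diagonal g = (Z * specV Z) * diagonal g' := by
  ext i j
  rw [Matrix.mul_diagonal, Matrix.mul_diagonal]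
  by_cases hj : specμ Z j = 0
  · rw [col_zero Z hj, zero_mul, zero_mul]
  · rw [h j hj]

lemma Z_recover (Z : Matrix m n ℝ) : (Z * specV Z) * star (specV Z) = Z := by
  rw [Matrix.mul_assoc, specV_mul_star, Matrix.mul_one]

lemma nuclearNorm_eq_sum (Z : Matrix m n ℝ) :
    nuclearNorm Z = ∑ j, Real.sqrt (specμ Z j) := by
  rw [nuclearNorm, Matrix.trace_mul_comm, ← Matrix.mul_assoc]
  have : (star ((Matrix.posSemidef_conjTranspose_mul_self Z).1.eigenvectorUnitary :
      Matrix n n ℝ)) * ((Matrix.posSemidef_conjTranspose_mul_self Z).1.eigenvectorUnitary :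
      Matrix n n ℝ) = 1 := star_mul_specV Z
  rw [this, Matrix.one_mul, Matrix.trace_diagonal]
  simp [specμ]

lemma trace_BdB (Z : Matrix m n ℝ) (h : n → ℝ) :
    ((Z * specV Z) * diagonal h * (Z * specV Z)ᴴ).trace = ∑ j, specμ Z j * h j := by
  rw [Matrix.trace_mul_comm, ← Matrix.mul_assoc, BtB, Matrix.diagonal_mul_diagonal,
    Matrix.trace_diagonal]

lemma trace_VdV (Z : Matrix m n ℝ) (h : n → ℝ) :
    (specV Z * diagonal h * star (specV Z)).trace = ∑ j, h j := by
  rw [Matrix.trace_mul_comm, ← Matrix.mul_assoc, star_mul_specV, Matrix.one_mul,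
    Matrix.trace_diagonal]

lemma exists_factorization (a b : ℝ) (ha : 0 < a) (hb : 0 < b) (Z : Matrix m n ℝ) :
    ∃ W1 : Matrix m m ℝ, ∃ H1 : Matrix m n ℝ, W1 * H1 = Z ∧
      a / 2 * frobSq W1 + b / 2 * frobSq H1 = Real.sqrt (a * b) * nuclearNorm Z := by
  classical
  set B := Z * specV Z with hB
  set μ := specμ Z with hμ
  have hμ0 : ∀ j, 0 ≤ μ j := specμ_nonneg Z
  set q : n → ℝ := fun j => Real.sqrt (Real.sqrt (μ j)) with hq
  have hq0 : ∀ j, 0 ≤ q j := fun j => Real.sqrt_nonneg _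
  have hq2 : ∀ j, q j ^ 2 = Real.sqrt (μ j) := fun j => Real.sq_sqrt (Real.sqrt_nonneg _)
  have hq4 : ∀ j, q j ^ 4 = μ j := by
    intro j
    have : q j ^ 4 = (q j ^ 2) ^ 2 := by ring
    rw [this, hq2, Real.sq_sqrt (hμ0 j)]
  have hqne : ∀ j, μ j ≠ 0 → q j ≠ 0 := by
    intro j hj h0
    exact hj (by rw [← hq4 j, h0]; ring)
  set f : n → ℝ := fun j => if μ j = 0 then 0 else (q j ^ 3)⁻¹ with hf
  set g : n → ℝ := fun j => if μ j = 0 then 0 else (q j)⁻¹ with hg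
  set α := Real.sqrt (Real.sqrt (b / a)) with hα
  set β := Real.sqrt (Real.sqrt (a / b)) with hβ
  have hab : 0 < a * b := mul_pos ha hb
  have hαβ : α * β = 1 := by
    rw [hα, hβ, ← Real.sqrt_mul (Real.sqrt_nonneg _), ← Real.sqrt_mul (by positivity)]
    have : b / a * (a / b) = 1 := by field_simp
    rw [this, Real.sqrt_one, Real.sqrt_one]
  have hα2 : α ^ 2 = Real.sqrt (b / a) := Real.sq_sqrt (Real.sqrt_nonneg _)
  have hβ2 : β ^ 2 = Real.sqrt (a / b) := Real.sq_sqrt (Real.sqrt_nonneg _)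
  refine ⟨α • (B * diagonal f * Bᴴ), β • (B * diagonal g * star (specV Z)), ?_, ?_⟩
  · -- product equals Z
    have expand : (B * diagonal f * Bᴴ) * (B * diagonal g * star (specV Z))
        = B * diagonal (fun j => f j * (μ j * g j)) * star (specV Z) := by
      have : (B * diagonal f * Bᴴ) * (B * diagonal g * star (specV Z))
          = B * (diagonal f * ((Bᴴ * B) * diagonal g)) * star (specV Z) := by
        simp only [Matrix.mul_assoc]
      rw [this, hB, BtB Z, ← hμ, Matrix.diagonal_mul_diagonal, Matrix.diagonal_mul_diagonal]
    have congr1 : B * diagonal (fun j => f j * (μ j * g j)) = B * diagonal (fun _ => (1:ℝ)) := by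
      apply mul_diagonal_congr
      intro j hj
      have hj' : ¬ μ j = 0 := hj
      simp only [hf, hg, if_neg hj']
      rw [← hq4 j]
      have := hqne j hj
      field_simp
    rw [Matrix.smul_mul, Matrix.mul_smul, smul_smul, expand, congr1,
      (show (diagonal fun _ => (1:ℝ)) = (1 : Matrix n n ℝ) from Matrix.diagonal_one), hαβ, one_smul]
    exact (congrArg (· * star (specV Z)) (Matrix.mul_one B)).trans (Z_recover Z)
  · -- cost
    have hfs : frobSq (B * diagonal f * Bᴴ) = ∑ j, Real.sqrt (μ j) := by
      rw [frobSq_eq_trace]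
      have hherm : (B * diagonal f * Bᴴ)ᴴ = B * diagonal f * Bᴴ := by
        simp [Matrix.conjTranspose_mul, Matrix.diagonal_conjTranspose, Matrix.mul_assoc]
      rw [hherm]
      have : (B * diagonal f * Bᴴ) * (B * diagonal f * Bᴴ)
          = B * diagonal (fun j => f j * (μ j * f j)) * Bᴴ := by
        have : (B * diagonal f * Bᴴ) * (B * diagonal f * Bᴴ)
            = B * (diagonal f * ((Bᴴ * B) * diagonal f)) * Bᴴ := by
          simp only [Matrix.mul_assoc]
        rw [this, hB, BtB Z, ← hμ, Matrix.diagonal_mul_diagonal, Matrix.diagonal_mul_diagonal]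
      rw [this, hB, trace_BdB, ← hμ]
      apply Finset.sum_congr rfl
      intro j _
      by_cases hj : μ j = 0
      · simp [hf, hj]
      · simp only [hf, if_neg hj]
        rw [← hq2 j, ← hq4 j]
        have := hqne j hj
        field_simp
    have hgs : frobSq (B * diagonal g * star (specV Z)) = ∑ j, Real.sqrt (μ j) := by
      rw [frobSq_eq_trace]
      have hct : (B * diagonal g * star (specV Z))ᴴ = specV Z * diagonal g * Bᴴ := by
        simp [Matrix.conjTranspose_mul, Matrix.diagonal_conjTranspose, Matrix.star_eq_conjTranspose,
          Matrix.mul_assoc]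
      rw [hct]
      have : (specV Z * diagonal g * Bᴴ) * (B * diagonal g * star (specV Z))
          = specV Z * diagonal (fun j => g j * (μ j * g j)) * star (specV Z) := by
        have : (specV Z * diagonal g * Bᴴ) * (B * diagonal g * star (specV Z))
            = specV Z * (diagonal g * ((Bᴴ * B) * diagonal g)) * star (specV Z) := by
          simp only [Matrix.mul_assoc]
        rw [this, hB, BtB Z, ← hμ, Matrix.diagonal_mul_diagonal, Matrix.diagonal_mul_diagonal]
      rw [this, trace_VdV]
      apply Finset.sum_congr rfl
      intro j _
      by_cases hj : μ j = 0
      · simp [hg, hj]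
      · simp only [hg, if_neg hj]
        rw [← hq2 j, ← hq4 j]
        have := hqne j hj
        field_simp
    rw [frobSq_smul, frobSq_smul, hfs, hgs, nuclearNorm_eq_sum, ← hμ, hα2, hβ2]
    have h1 : a * Real.sqrt (b / a) = Real.sqrt (a * b) := by
      rw [show a * Real.sqrt (b/a) = Real.sqrt (a^2) * Real.sqrt (b/a) by
        rw [Real.sqrt_sq ha.le], ← Real.sqrt_mul (by positivity)]
      congr 1; field_simp
    have h2 : b * Real.sqrt (a / b) = Real.sqrt (a * b) := by
      rw [show b * Real.sqrt (a/b) = Real.sqrt (b^2) * Real.sqrt (a/b) by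
        rw [Real.sqrt_sq hb.le], ← Real.sqrt_mul (by positivity)]
      congr 1; field_simp
    nlinarith [Real.sqrt_nonneg (a*b), Finset.sum_nonneg (fun j (_: j ∈ Finset.univ) => Real.sqrt_nonneg (μ j))]

lemma nuclearNorm_nonneg (Z : Matrix m n ℝ) : 0 ≤ nuclearNorm Z := by
  rw [nuclearNorm_eq_sum]
  exact Finset.sum_nonneg fun j _ => Real.sqrt_nonneg _

lemma trace_CS (X Y : Matrix m n ℝ) :
    (Xᴴ * Y).trace ≤ Real.sqrt (frobSq X) * Real.sqrt (frobSq Y) := by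
  have htr : (Xᴴ * Y).trace = ∑ p : m × n, X p.1 p.2 * Y p.1 p.2 := by
    rw [Matrix.trace, Fintype.sum_prod_type]
    simp only [Matrix.diag, Matrix.mul_apply, Matrix.conjTranspose_apply, star_trivial]
    exact Finset.sum_comm
  have hX : frobSq X = ∑ p : m × n, X p.1 p.2 ^ 2 := by
    rw [frobSq, Fintype.sum_prod_type]
  have hY : frobSq Y = ∑ p : m × n, Y p.1 p.2 ^ 2 := by
    rw [frobSq, Fintype.sum_prod_type]
  have hcs := Finset.sum_mul_sq_le_sq_mul_sq Finset.univ
    (fun p : m × n => X p.1 p.2) (fun p : m × n => Y p.1 p.2)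
  rw [htr, hX, hY]
  have h1 : (∑ p : m × n, X p.1 p.2 * Y p.1 p.2)
      ≤ Real.sqrt ((∑ p : m × n, X p.1 p.2 * Y p.1 p.2) ^ 2) := by
    rw [Real.sqrt_sq_eq_abs]; exact le_abs_self _
  refine h1.trans ?_
  rw [← Real.sqrt_mul (Finset.sum_nonneg fun p _ => sq_nonneg _)]
  exact Real.sqrt_le_sqrt hcs

lemma frobSq_conjTranspose (A : Matrix m n ℝ) : frobSq Aᴴ = frobSq A := by
  rw [frobSq_eq_trace, frobSq_eq_trace, Matrix.conjTranspose_conjTranspose,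
    Matrix.trace_mul_comm]

lemma nuclear_mul_le {p : Type*} [Fintype p] (A : Matrix m p ℝ) (B : Matrix p n ℝ) :
    nuclearNorm (A * B) ≤ Real.sqrt (frobSq A) * Real.sqrt (frobSq B) := by
  classical
  set Z := A * B with hZ
  set μ := specμ Z with hμ
  have hμ0 : ∀ j, 0 ≤ μ j := specμ_nonneg Z
  set M := Z * specV Z with hM
  set t : n → ℝ := fun j => if μ j = 0 then 0 else (Real.sqrt (μ j))⁻¹ with ht
  set N := M * diagonal t with hN
  have hMM : Mᴴ * M = diagonal μ := BtB Z
  have hNM : Nᴴ * M = diagonal (fun j => Real.sqrt (μ j)) := by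
    rw [hN, Matrix.conjTranspose_mul, Matrix.diagonal_conjTranspose, Matrix.mul_assoc,
      hMM, Matrix.diagonal_mul_diagonal]
    refine congrArg Matrix.diagonal (funext fun j => ?_)
    by_cases hj : μ j = 0
    · simp [ht, hj]
    · have hs : Real.sqrt (μ j) ≠ 0 := by
        rw [ne_eq, Real.sqrt_eq_zero (hμ0 j)]; exact hj
      simp only [Pi.star_apply, star_trivial, ht, if_neg hj]
      field_simp
      rw [Real.sq_sqrt (hμ0 j)]
  have hNtN : Nᴴ * N = diagonal (fun j => if μ j = 0 then (0:ℝ) else 1) := by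
    rw [hN, Matrix.conjTranspose_mul, Matrix.diagonal_conjTranspose, Matrix.mul_assoc,
      ← Matrix.mul_assoc Mᴴ, hMM, Matrix.diagonal_mul_diagonal, Matrix.diagonal_mul_diagonal]
    refine congrArg Matrix.diagonal (funext fun j => ?_)
    by_cases hj : μ j = 0
    · simp [ht, hj]
    · have hs : Real.sqrt (μ j) ≠ 0 := by
        rw [ne_eq, Real.sqrt_eq_zero (hμ0 j)]; exact hj
      simp only [Pi.star_apply, star_trivial, ht, if_neg hj]
      field_simp
      rw [Real.sq_sqrt (hμ0 j)]
  have hNp : N * diagonal (fun j => if μ j = 0 then (0:ℝ) else 1) = N := by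
    rw [hN, Matrix.mul_assoc, Matrix.diagonal_mul_diagonal]
    refine congrArg _ (congrArg Matrix.diagonal (funext fun j => ?_))
    by_cases hj : μ j = 0 <;> simp [ht, hj]
  have hPsym : (N * Nᴴ)ᴴ = N * Nᴴ := by
    rw [Matrix.conjTranspose_mul, Matrix.conjTranspose_conjTranspose]
  have hPidem : (N * Nᴴ) * (N * Nᴴ) = N * Nᴴ := by
    rw [Matrix.mul_assoc, ← Matrix.mul_assoc Nᴴ, hNtN, ← Matrix.mul_assoc, hNp]
  have hfrobAN : frobSq (Aᴴ * N) = (A * (Aᴴ * (N * Nᴴ))).trace := by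
    rw [frobSq_eq_trace, Matrix.conjTranspose_mul, Matrix.conjTranspose_conjTranspose,
      show (Nᴴ * A) * (Aᴴ * N) = Nᴴ * (A * (Aᴴ * N)) by simp only [Matrix.mul_assoc],
      Matrix.trace_mul_comm]
    simp only [Matrix.mul_assoc]
  have hmono : (A * (Aᴴ * (N * Nᴴ))).trace ≤ (A * Aᴴ).trace := by
    set P := N * Nᴴ with hP
    have h0 : 0 ≤ frobSq ((1 - P) * A) := frobSq_nonneg _
    have hsub : (1 - P) * (1 - P) = 1 - P := by
      rw [Matrix.sub_mul, Matrix.mul_sub, Matrix.mul_sub, hPidem]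
      simp only [Matrix.one_mul, Matrix.mul_one]
      abel
    have e1 : ((1 - P) * A)ᴴ * ((1 - P) * A) = Aᴴ * ((1 - P) * A) := by
      rw [Matrix.conjTranspose_mul, Matrix.conjTranspose_sub, Matrix.conjTranspose_one, hPsym,
        show (Aᴴ * (1 - P)) * ((1 - P) * A) = Aᴴ * (((1 - P) * (1 - P)) * A) by
          simp only [Matrix.mul_assoc],
        hsub]
    have c2 : (Aᴴ * (P * A)).trace = (A * (Aᴴ * P)).trace := by
      rw [Matrix.trace_mul_comm Aᴴ (P * A), Matrix.mul_assoc,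
        show A * (Aᴴ * P) = (A * Aᴴ) * P by simp only [Matrix.mul_assoc],
        Matrix.trace_mul_comm]
    have hexp : frobSq ((1 - P) * A) = (A * Aᴴ).trace - (A * (Aᴴ * P)).trace := by
      rw [frobSq_eq_trace, e1, Matrix.sub_mul, Matrix.one_mul, Matrix.mul_sub,
        Matrix.trace_sub, Matrix.trace_mul_comm, c2]
    have : (A * (Aᴴ * P)).trace ≤ (A * Aᴴ).trace := by linarith
    exact this
  have hBV : frobSq (B * specV Z) = frobSq B := by
    rw [frobSq_eq_trace, frobSq_eq_trace, Matrix.conjTranspose_mul,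
      show ((specV Z)ᴴ * Bᴴ) * (B * specV Z) = (specV Z)ᴴ * ((Bᴴ * B) * specV Z) by
        simp only [Matrix.mul_assoc],
      Matrix.trace_mul_comm, Matrix.mul_assoc, ← Matrix.star_eq_conjTranspose,
      specV_mul_star, Matrix.mul_one]
  have hANle : frobSq (Aᴴ * N) ≤ frobSq A := by
    rw [hfrobAN]
    refine hmono.trans_eq ?_
    rw [← frobSq_conjTranspose A, frobSq_eq_trace, Matrix.conjTranspose_conjTranspose]
  calc nuclearNorm Z = (Nᴴ * M).trace := by
        rw [nuclearNorm_eq_sum, ← hμ, hNM, Matrix.trace_diagonal]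
    _ = ((Aᴴ * N)ᴴ * (B * specV Z)).trace := by
        rw [Matrix.conjTranspose_mul Aᴴ N, Matrix.conjTranspose_conjTranspose, hM, hZ]
        simp only [Matrix.mul_assoc]
    _ ≤ Real.sqrt (frobSq (Aᴴ * N)) * Real.sqrt (frobSq (B * specV Z)) := trace_CS _ _
    _ ≤ Real.sqrt (frobSq A) * Real.sqrt (frobSq B) := by
        rw [hBV]
        exact mul_le_mul_of_nonneg_right (Real.sqrt_le_sqrt hANle) (Real.sqrt_nonneg _)


lemma bdd_of_nonneg {ι : Sort*} (f : ι → ℝ) (h : ∀ i, 0 ≤ f i) :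
    BddBelow (Set.range f) := ⟨0, by rintro x ⟨i, rfl⟩; exact h i⟩

end NuclearAux

/-- Reduction of the three-factor extended UFM objective to a two-factor objective with
a nuclear-norm penalty on the deeper features `H̄ = W₁H̄₁`:
`inf_{W₂,W₁,H̄₁} (1/(2K))‖W₂W₁H̄₁ − I‖² + (λ_{W2}/2)‖W₂‖² + (λ_{W1}/2)‖W₁‖² + (nλ_{H1}/2)‖H̄₁‖²
 = inf_{W₂,H̄} (1/(2K))‖W₂H̄ − I‖² + (λ_{W2}/2)‖W₂‖² + √(nλ_{W1}λ_{H1})‖H̄‖_*`. -/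
theorem three_factor_reduces_to_nuclear_on_features
    (K d n : ℕ) (hK : 1 ≤ K) (hd : K ≤ d) (hn : 1 ≤ n)
    (lW2 lW1 lH1 : ℝ) (hlW2 : 0 < lW2) (hlW1 : 0 < lW1) (hlH1 : 0 < lH1) :
    (⨅ W2 : Matrix (Fin K) (Fin d) ℝ, ⨅ W1 : Matrix (Fin d) (Fin d) ℝ,
      ⨅ Hb1 : Matrix (Fin d) (Fin K) ℝ,
        (1 / (2 * (K : ℝ)) * frobSq (W2 * W1 * Hb1 - 1)
          + lW2 / 2 * frobSq W2 + lW1 / 2 * frobSq W1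
          + ((n : ℝ) * lH1) / 2 * frobSq Hb1))
    = ⨅ W2 : Matrix (Fin K) (Fin d) ℝ, ⨅ Hb : Matrix (Fin d) (Fin K) ℝ,
        (1 / (2 * (K : ℝ)) * frobSq (W2 * Hb - 1)
          + lW2 / 2 * frobSq W2
          + Real.sqrt ((n : ℝ) * lW1 * lH1) * nuclearNorm Hb) := by
  have hn' : (0:ℝ) < (n : ℝ) := by exact_mod_cast Nat.lt_of_lt_of_le Nat.zero_lt_one hn
  set b : ℝ := (n : ℝ) * lH1 with hbdef
  have hb : 0 < b := mul_pos hn' hlH1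
  have hK0 : (0:ℝ) ≤ 1 / (2 * (K : ℝ)) := by positivity
  have hsab : Real.sqrt (lW1 * b) = Real.sqrt ((n : ℝ) * lW1 * lH1) := by
    rw [hbdef]; ring_nf
  set F3 : Matrix (Fin K) (Fin d) ℝ → Matrix (Fin d) (Fin d) ℝ →
      Matrix (Fin d) (Fin K) ℝ → ℝ := fun W2 W1 Hb1 =>
    1 / (2 * (K : ℝ)) * frobSq (W2 * W1 * Hb1 - 1)
      + lW2 / 2 * frobSq W2 + lW1 / 2 * frobSq W1 + b / 2 * frobSq Hb1 with hF3
  set F2 : Matrix (Fin K) (Fin d) ℝ → Matrix (Fin d) (Fin K) ℝ → ℝ := fun W2 Hb =>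
    1 / (2 * (K : ℝ)) * frobSq (W2 * Hb - 1) + lW2 / 2 * frobSq W2
      + Real.sqrt ((n : ℝ) * lW1 * lH1) * nuclearNorm Hb with hF2
  have h3nn : ∀ W2 W1 Hb1, 0 ≤ F3 W2 W1 Hb1 := fun W2 W1 Hb1 => by
    have := NuclearAux.frobSq_nonneg (W2 * W1 * Hb1 - 1)
    have := NuclearAux.frobSq_nonneg W2
    have := NuclearAux.frobSq_nonneg W1
    have := NuclearAux.frobSq_nonneg Hb1
    have : (0:ℝ) ≤ b / 2 * frobSq Hb1 := by positivity
    simp only [hF3]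
    positivity
  have h2nn : ∀ W2 Hb, 0 ≤ F2 W2 Hb := fun W2 Hb => by
    have := NuclearAux.frobSq_nonneg (W2 * Hb - 1)
    have := NuclearAux.frobSq_nonneg W2
    have := NuclearAux.nuclearNorm_nonneg Hb
    simp only [hF2]
    positivity
  apply le_antisymm
  · refine le_ciInf fun W2 => le_ciInf fun Hb => ?_
    obtain ⟨W1, Hb1, hfac, hcost⟩ := NuclearAux.exists_factorization lW1 b hlW1 hb Hb
    have step1 : (⨅ W2', ⨅ W1', ⨅ Hb1', F3 W2' W1' Hb1') ≤ F3 W2 W1 Hb1 := by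
      refine le_trans (ciInf_le (NuclearAux.bdd_of_nonneg _ fun W2' =>
        le_ciInf fun W1' => le_ciInf fun Hb1' => h3nn W2' W1' Hb1') W2) ?_
      refine le_trans (ciInf_le (NuclearAux.bdd_of_nonneg _ fun W1' =>
        le_ciInf fun Hb1' => h3nn W2 W1' Hb1') W1) ?_
      exact ciInf_le (NuclearAux.bdd_of_nonneg _ fun Hb1' => h3nn W2 W1 Hb1') Hb1
    refine step1.trans_eq ?_
    simp only [hF3, hF2]
    rw [Matrix.mul_assoc, hfac]
    rw [show 1 / (2 * (K : ℝ)) * frobSq (W2 * Hb - 1) + lW2 / 2 * frobSq W2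
        + lW1 / 2 * frobSq W1 + b / 2 * frobSq Hb1
      = 1 / (2 * (K : ℝ)) * frobSq (W2 * Hb - 1) + lW2 / 2 * frobSq W2
        + (lW1 / 2 * frobSq W1 + b / 2 * frobSq Hb1) by ring, hcost, hsab]
  · refine le_ciInf fun W2 => le_ciInf fun W1 => le_ciInf fun Hb1 => ?_
    have step1 : (⨅ W2', ⨅ Hb', F2 W2' Hb') ≤ F2 W2 (W1 * Hb1) := by
      refine le_trans (ciInf_le (NuclearAux.bdd_of_nonneg _ fun W2' =>
        le_ciInf fun Hb' => h2nn W2' Hb') W2) ?_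
      exact ciInf_le (NuclearAux.bdd_of_nonneg _ fun Hb' => h2nn W2 Hb') (W1 * Hb1)
    refine step1.trans ?_
    simp only [hF2, hF3]
    rw [← Matrix.mul_assoc]
    have hnuc : Real.sqrt ((n : ℝ) * lW1 * lH1) * nuclearNorm (W1 * Hb1)
        ≤ lW1 / 2 * frobSq W1 + b / 2 * frobSq Hb1 := by
      have h := NuclearAux.nuclear_mul_le W1 Hb1
      set x := Real.sqrt (frobSq W1) with hx
      set y := Real.sqrt (frobSq Hb1) with hy
      have hx2 : x ^ 2 = frobSq W1 := Real.sq_sqrt (NuclearAux.frobSq_nonneg _)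
      have hy2 : y ^ 2 = frobSq Hb1 := Real.sq_sqrt (NuclearAux.frobSq_nonneg _)
      have hx0 : 0 ≤ x := Real.sqrt_nonneg _
      have hy0 : 0 ≤ y := Real.sqrt_nonneg _
      have hs : Real.sqrt ((n : ℝ) * lW1 * lH1) = Real.sqrt lW1 * Real.sqrt b := by
        rw [← Real.sqrt_mul hlW1.le, hsab]
      have ha2 : Real.sqrt lW1 ^ 2 = lW1 := Real.sq_sqrt hlW1.le
      have hb2 : Real.sqrt b ^ 2 = b := Real.sq_sqrt hb.le
      have hnn : 0 ≤ nuclearNorm (W1 * Hb1) := NuclearAux.nuclearNorm_nonneg _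
      have h2 : Real.sqrt ((n : ℝ) * lW1 * lH1) * nuclearNorm (W1 * Hb1)
          ≤ Real.sqrt lW1 * Real.sqrt b * (x * y) := by
        rw [hs]
        exact mul_le_mul_of_nonneg_left h (by positivity)
      refine h2.trans ?_
      nlinarith [sq_nonneg (Real.sqrt lW1 * x - Real.sqrt b * y), Real.sqrt_nonneg lW1,
        Real.sqrt_nonneg b]
    linarith
end
end

section
/- Let K ≥ 1, d ≥ 1, n ≥ 1, and λ_{W2}, λ_{W1}, λ_{H1} > 0. Let (W₂, W₁, H₁) ∈ ℝ^{K×d} × ℝ^{d×d} × ℝ^{d×Kn} be a global minimizer (or, more generally, any critical point where all partial derivatives vanish) of g(W₂,W₁,H₁) := (1/(2Kn))‖W₂W₁H₁ − Y‖_F² + (λ_{W2}/2)‖W₂‖_F² + (λ_{W1}/2)‖W₁‖_F² + (λ_{H1}/2)‖H₁‖_F². Then the layer balancedness identities hold: λ_{W2}·W₂ᵀW₂ = λ_{W1}·W₁W₁ᵀ and λ_{W1}·W₁ᵀW₁ = λ_{H1}·H₁H₁ᵀ. -/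
open Matrix Finset

noncomputable section

def ip {m n : Type*} [Fintype m] [Fintype n] (A B : Matrix m n ℝ) : ℝ :=
  ∑ i, ∑ j, A i j * B i j

lemma frobSq_eq_ip {m n : Type*} [Fintype m] [Fintype n] (A : Matrix m n ℝ) :
    frobSq A = ip A A := by
  simp [frobSq, ip, sq]

lemma ip_self_eq_zero {m n : Type*} [Fintype m] [Fintype n] {A : Matrix m n ℝ}
    (h : ip A A = 0) : A = 0 := by
  ext i j
  have h1 : ∀ i ∈ Finset.univ (α := m), (0:ℝ) ≤ ∑ j, A i j * A i j :=
    fun i _ => Finset.sum_nonneg fun j _ => mul_self_nonneg _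
  have h2 := (Finset.sum_eq_zero_iff_of_nonneg h1).mp h i (Finset.mem_univ i)
  have h3 := (Finset.sum_eq_zero_iff_of_nonneg
    (fun j _ => mul_self_nonneg (A i j))).mp h2 j (Finset.mem_univ j)
  simpa [mul_self_eq_zero] using h3

lemma ip_expand {m n : Type*} [Fintype m] [Fintype n] (A B : Matrix m n ℝ) (t : ℝ) :
    ip (A + t • B) (A + t • B) = ip A A + (2 * ip A B) * t + ip B B * t ^ 2 := by
  have key : ∀ i j, (A i j + t * B i j) * (A i j + t * B i j)
      = A i j * A i j + (2 * (A i j * B i j)) * t + (B i j * B i j) * t ^ 2 := by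
    intros; ring
  simp only [ip, Matrix.add_apply, Matrix.smul_apply, smul_eq_mul, key,
    Finset.sum_add_distrib, Finset.sum_mul, Finset.mul_sum]

lemma ip_add_left {m n : Type*} [Fintype m] [Fintype n] (A B C : Matrix m n ℝ) :
    ip (A + B) C = ip A C + ip B C := by
  simp [ip, add_mul, Finset.sum_add_distrib]

lemma ip_smul_left {m n : Type*} [Fintype m] [Fintype n] (s : ℝ) (A B : Matrix m n ℝ) :
    ip (s • A) B = s * ip A B := by
  simp [ip, Finset.mul_sum, mul_assoc]

lemma ip_mul_right {m n p : Type*} [Fintype m] [Fintype n] [Fintype p]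
    (E : Matrix m p ℝ) (D : Matrix m n ℝ) (M : Matrix n p ℝ) :
    ip E (D * M) = ip (E * Mᵀ) D := by
  simp only [ip, Matrix.mul_apply, Matrix.transpose_apply, Finset.mul_sum, Finset.sum_mul]
  refine Finset.sum_congr rfl fun i _ => ?_
  rw [Finset.sum_comm]
  exact Finset.sum_congr rfl fun j _ => Finset.sum_congr rfl fun p _ => by ring

lemma ip_transpose {m n : Type*} [Fintype m] [Fintype n] (A B : Matrix m n ℝ) :
    ip Aᵀ Bᵀ = ip A B := by
  simp only [ip, Matrix.transpose_apply]
  rw [Finset.sum_comm]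

lemma ip_mul_left {m n p : Type*} [Fintype m] [Fintype n] [Fintype p]
    (E : Matrix m p ℝ) (M : Matrix m n ℝ) (D : Matrix n p ℝ) :
    ip E (M * D) = ip (Mᵀ * E) D := by
  rw [← ip_transpose E (M * D), Matrix.transpose_mul, ip_mul_right,
    Matrix.transpose_transpose, ← ip_transpose (Mᵀ * E) D, Matrix.transpose_mul,
    Matrix.transpose_transpose]

lemma quad_zero {a b : ℝ} (h : ∀ t : ℝ, 0 ≤ a * t ^ 2 + b * t) : b = 0 := by
  by_contra hb
  set ε : ℝ := 1 / (|a| + 1) with hε_def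
  have hε : 0 < ε := by positivity
  have haε : a * ε < 1 := by
    rw [hε_def]
    rw [div_eq_mul_inv, one_mul, ← div_eq_mul_inv] -- a / (|a|+1)
    rw [div_lt_one (by positivity)]
    have := le_abs_self a
    linarith
  have hb2 : 0 < b ^ 2 := by positivity
  have := h (-(b * ε))
  have h1 : 0 < b ^ 2 * ε := mul_pos hb2 hε
  have h2 : 0 < 1 - a * ε := by linarith
  nlinarith [mul_pos h1 h2]

/-- Layer balancedness at global minimizers of the linear extended UFM:
`λ_{W2}·W₂ᵀW₂ = λ_{W1}·W₁W₁ᵀ` and `λ_{W1}·W₁ᵀW₁ = λ_{H1}·H₁H₁ᵀ`. -/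
theorem extended_ufm_layer_balancedness
    (K d n : ℕ) (hK : 1 ≤ K) (hd : 1 ≤ d) (hn : 1 ≤ n)
    (lW2 lW1 lH1 : ℝ) (hlW2 : 0 < lW2) (hlW1 : 0 < lW1) (hlH1 : 0 < lH1)
    (Y : Matrix (Fin K) (Fin K × Fin n) ℝ)
    (hY : ∀ k p, Y k p = if p.1 = k then 1 else 0)
    (g : Matrix (Fin K) (Fin d) ℝ → Matrix (Fin d) (Fin d) ℝ →
      Matrix (Fin d) (Fin K × Fin n) ℝ → ℝ)
    (hg : ∀ W2 W1 H1, g W2 W1 H1 =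
      1 / (2 * (K : ℝ) * (n : ℝ)) * frobSq (W2 * W1 * H1 - Y)
        + lW2 / 2 * frobSq W2 + lW1 / 2 * frobSq W1 + lH1 / 2 * frobSq H1)
    (W2 : Matrix (Fin K) (Fin d) ℝ) (W1 : Matrix (Fin d) (Fin d) ℝ)
    (H1 : Matrix (Fin d) (Fin K × Fin n) ℝ)
    (hmin : ∀ W2' W1' H1', g W2 W1 H1 ≤ g W2' W1' H1') :
    lW2 • (W2ᵀ * W2) = lW1 • (W1 * W1ᵀ) ∧
    lW1 • (W1ᵀ * W1) = lH1 • (H1 * H1ᵀ) := by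
  set c : ℝ := 1 / (2 * (K : ℝ) * (n : ℝ)) with hc
  set E : Matrix (Fin K) (Fin K × Fin n) ℝ := W2 * W1 * H1 - Y with hE
  -- gradient w.r.t. W2
  have hG2 : (2 * c) • (E * (W1 * H1)ᵀ) + lW2 • W2 = 0 := by
    have key : ∀ Δ : Matrix (Fin K) (Fin d) ℝ,
        ip ((2 * c) • (E * (W1 * H1)ᵀ) + lW2 • W2) Δ = 0 := by
      intro Δ
      have hq : ∀ t : ℝ, 0 ≤ (c * ip (Δ * (W1 * H1)) (Δ * (W1 * H1))
            + lW2 / 2 * ip Δ Δ) * t ^ 2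
          + (2 * c * ip E (Δ * (W1 * H1)) + lW2 * ip W2 Δ) * t := by
        intro t
        have h0 := hmin (W2 + t • Δ) W1 H1
        rw [hg, hg] at h0
        have hrw : (W2 + t • Δ) * W1 * H1 - Y = E + t • (Δ * (W1 * H1)) := by
          rw [hE]
          rw [Matrix.add_mul, Matrix.add_mul, Matrix.smul_mul, Matrix.smul_mul,
            Matrix.mul_assoc W2, Matrix.mul_assoc Δ]
          abel
        rw [hrw] at h0
        rw [frobSq_eq_ip, frobSq_eq_ip, frobSq_eq_ip, frobSq_eq_ip, frobSq_eq_ip,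
          frobSq_eq_ip, ip_expand, ip_expand] at h0
        rw [← hE] at h0
        nlinarith [h0]
      have hb := quad_zero hq
      have h1 : ip E (Δ * (W1 * H1)) = ip (E * (W1 * H1)ᵀ) Δ :=
        ip_mul_right E Δ (W1 * H1)
      rw [ip_add_left, ip_smul_left, ip_smul_left]
      rw [h1] at hb
      linarith [hb]
    exact ip_self_eq_zero (key _)
  -- gradient w.r.t. W1
  have hG1 : (2 * c) • (W2ᵀ * E * H1ᵀ) + lW1 • W1 = 0 := by
    have key : ∀ Δ : Matrix (Fin d) (Fin d) ℝ,
        ip ((2 * c) • (W2ᵀ * E * H1ᵀ) + lW1 • W1) Δ = 0 := by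
      intro Δ
      have hq : ∀ t : ℝ, 0 ≤ (c * ip (W2 * Δ * H1) (W2 * Δ * H1)
            + lW1 / 2 * ip Δ Δ) * t ^ 2
          + (2 * c * ip E (W2 * Δ * H1) + lW1 * ip W1 Δ) * t := by
        intro t
        have h0 := hmin W2 (W1 + t • Δ) H1
        rw [hg, hg] at h0
        have hrw : W2 * (W1 + t • Δ) * H1 - Y = E + t • (W2 * Δ * H1) := by
          rw [hE]
          rw [Matrix.mul_add, Matrix.add_mul, Matrix.mul_smul, Matrix.smul_mul]
          abel
        rw [hrw] at h0
        rw [frobSq_eq_ip, frobSq_eq_ip, frobSq_eq_ip, frobSq_eq_ip, frobSq_eq_ip,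
          frobSq_eq_ip, ip_expand, ip_expand] at h0
        rw [← hE] at h0
        nlinarith [h0]
      have hb := quad_zero hq
      have h1 : ip E (W2 * Δ * H1) = ip (W2ᵀ * E * H1ᵀ) Δ := by
        rw [Matrix.mul_assoc, ip_mul_left, ip_mul_right]
      rw [ip_add_left, ip_smul_left, ip_smul_left]
      rw [h1] at hb
      linarith [hb]
    exact ip_self_eq_zero (key _)
  -- gradient w.r.t. H1
  have hG3 : (2 * c) • (W1ᵀ * W2ᵀ * E) + lH1 • H1 = 0 := by
    have key : ∀ Δ : Matrix (Fin d) (Fin K × Fin n) ℝ,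
        ip ((2 * c) • (W1ᵀ * W2ᵀ * E) + lH1 • H1) Δ = 0 := by
      intro Δ
      have hq : ∀ t : ℝ, 0 ≤ (c * ip (W2 * W1 * Δ) (W2 * W1 * Δ)
            + lH1 / 2 * ip Δ Δ) * t ^ 2
          + (2 * c * ip E (W2 * W1 * Δ) + lH1 * ip H1 Δ) * t := by
        intro t
        have h0 := hmin W2 W1 (H1 + t • Δ)
        rw [hg, hg] at h0
        have hrw : W2 * W1 * (H1 + t • Δ) - Y = E + t • (W2 * W1 * Δ) := by
          rw [hE]
          rw [Matrix.mul_add, Matrix.mul_smul]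
          abel
        rw [hrw] at h0
        rw [frobSq_eq_ip, frobSq_eq_ip, frobSq_eq_ip, frobSq_eq_ip, frobSq_eq_ip,
          frobSq_eq_ip, ip_expand, ip_expand] at h0
        rw [← hE] at h0
        nlinarith [h0]
      have hb := quad_zero hq
      have h1 : ip E (W2 * W1 * Δ) = ip (W1ᵀ * W2ᵀ * E) Δ := by
        rw [ip_mul_left, Matrix.transpose_mul, Matrix.mul_assoc]
      rw [ip_add_left, ip_smul_left, ip_smul_left]
      rw [h1] at hb
      linarith [hb]
    exact ip_self_eq_zero (key _)
  constructor
  · have e2 := congrArg (fun X => W2ᵀ * X) hG2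
    have e1 := congrArg (fun X => X * W1ᵀ) hG1
    simp only [Matrix.mul_add, Matrix.add_mul, Matrix.mul_smul, Matrix.smul_mul,
      Matrix.mul_zero, Matrix.zero_mul] at e2 e1
    have hcomm : W2ᵀ * (E * (W1 * H1)ᵀ) = W2ᵀ * E * H1ᵀ * W1ᵀ := by
      rw [Matrix.transpose_mul, ← Matrix.mul_assoc, ← Matrix.mul_assoc]
    rw [hcomm] at e2
    exact add_left_cancel (e2.trans e1.symm)
  · have e2 := congrArg (fun X => W1ᵀ * X) hG1
    have e1 := congrArg (fun X => X * H1ᵀ) hG3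
    simp only [Matrix.mul_add, Matrix.add_mul, Matrix.mul_smul, Matrix.smul_mul,
      Matrix.mul_zero, Matrix.zero_mul] at e2 e1
    have hcomm : W1ᵀ * (W2ᵀ * E * H1ᵀ) = W1ᵀ * W2ᵀ * E * H1ᵀ := by
      rw [← Matrix.mul_assoc, ← Matrix.mul_assoc]
    rw [hcomm] at e2
    exact add_left_cancel (e2.trans e1.symm)
end
end
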